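/- arXiv:1412.2047 — 6 statements merged into one kernel-verified Lean document; each statement's English description precedes it below -/
import Mathlib

section
/- Let (X,𝔅,μ) be a σ-finite measure space and {F_t} a measurable flow on it. Suppose there exists a measurable set A ⊆ X of positive measure such that for all δ > 0, limsup_{s→∞} μ(Λ_{F,δ,s}(A)) = 0, where Λ_{F,δ,s}(A) = {x ∈ A : ∃ t with e^{s-δ} < |t| < e^{s+δ} and F_t(x) ∈ A}. If μ' is a σ-finite measure equivalent to μ, then there exists a measurable set B ⊆ X with μ'(B) > 0 such that for all δ > 0, limsup_{s→∞} μ'(Λ_{F,δ,s}(B)) = 0. -/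
open MeasureTheory Filter Set
open scoped ENNReal

/-- The return set `Λ_{F,δ,s}(A)` of a flow `F`. -/
def lamSet {X : Type*} (F : ℝ → X → X) (A : Set X) (δ s : ℝ) : Set X :=
  {x | x ∈ A ∧ ∃ t : ℝ, Real.exp (s - δ) < |t| ∧ |t| < Real.exp (s + δ) ∧ F t x ∈ A}

lemma lamSet_subset_self {X : Type*} (F : ℝ → X → X) (A : Set X) (δ s : ℝ) :
    lamSet F A δ s ⊆ A := fun x hx => hx.1

lemma lamSet_mono {X : Type*} (F : ℝ → X → X) {A B : Set X} (h : B ⊆ A) (δ s : ℝ) :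
    lamSet F B δ s ⊆ lamSet F A δ s := by
  rintro x ⟨hxB, t, h1, h2, h3⟩
  exact ⟨h hxB, t, h1, h2, h h3⟩

theorem stmt_0 {X : Type*} [MeasurableSpace X] (μ μ' : Measure X)
    [SigmaFinite μ] [SigmaFinite μ']
    (F : ℝ → X → X)
    (hFmeas : Measurable (fun p : ℝ × X => F p.1 p.2))
    (hF0 : ∀ x, F 0 x = x)
    (hFadd : ∀ s t : ℝ, ∀ x, F (s + t) x = F s (F t x))
    (hFns : ∀ t : ℝ, Measure.QuasiMeasurePreserving (F t) μ μ)
    (A : Set X) (hAm : MeasurableSet A) (hApos : 0 < μ A)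
    (hA : ∀ δ : ℝ, 0 < δ → limsup (fun s : ℝ => μ (lamSet F A δ s)) atTop = 0)
    (h1 : μ' ≪ μ) (h2 : μ ≪ μ') :
    ∃ B : Set X, MeasurableSet B ∧ 0 < μ' B ∧
      ∀ δ : ℝ, 0 < δ → limsup (fun s : ℝ => μ' (lamSet F B δ s)) atTop = 0 := by
  set f := μ'.rnDeriv μ with hf
  have hfmeas : Measurable f := μ'.measurable_rnDeriv μ
  have hμ'wd : μ.withDensity f = μ' := Measure.withDensity_rnDeriv_eq μ' μ h1
  -- B n := A ∩ {f ≤ n}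
  set Bn : ℕ → Set X := fun n => A ∩ {x | f x ≤ (n : ℝ≥0∞)} with hBn
  have hBnm : ∀ n, MeasurableSet (Bn n) := fun n =>
    hAm.inter (hfmeas measurableSet_Iic)
  -- some n has μ' (Bn n) > 0
  have hApos' : 0 < μ' A := by
    rcases eq_or_lt_of_le (zero_le : (0 : ℝ≥0∞) ≤ μ' A) with h | h
    · exact absurd (h2 h.symm) hApos.ne'
    · exact h
  have hAsub : μ' (A \ ⋃ n, Bn n) = 0 := by
    apply h1
    have hsub : A \ ⋃ n, Bn n ⊆ {x | f x = ∞} := by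
      intro x hx
      by_contra hxf
      refine hx.2 (mem_iUnion.2 ?_)
      obtain ⟨m, hm⟩ := ENNReal.exists_nat_gt hxf
      exact ⟨m, hx.1, hm.le⟩
    refine measure_mono_null hsub ?_
    have := Measure.rnDeriv_lt_top μ' μ
    simpa [ae_iff] using this
  obtain ⟨n, hn⟩ : ∃ n, 0 < μ' (Bn n) := by
    by_contra hcon
    push_neg at hcon
    simp only [nonpos_iff_eq_zero] at hcon
    have : μ' A ≤ μ' (A \ ⋃ n, Bn n) + μ' (⋃ n, Bn n) := by
      refine le_trans (measure_mono ?_) (measure_union_le _ _)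
      intro x hx
      by_cases h : x ∈ ⋃ n, Bn n
      · exact Or.inr h
      · exact Or.inl ⟨hx, h⟩
    rw [hAsub, measure_iUnion_null hcon] at this
    simpa using hApos'.trans_le this
  refine ⟨Bn n, hBnm n, hn, ?_⟩
  -- key: μ' S ≤ n * μ S for S ⊆ Bn n
  have key : ∀ S : Set X, S ⊆ Bn n → μ' S ≤ (n : ℝ≥0∞) * μ S := by
    intro S hS
    set T := toMeasurable μ S ∩ Bn n with hT
    have hTm : MeasurableSet T := (measurableSet_toMeasurable μ S).inter (hBnm n)
    have hST : S ⊆ T := subset_inter (subset_toMeasurable μ S) hS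
    have hμT : μ T ≤ μ S := by
      calc μ T ≤ μ (toMeasurable μ S) := measure_mono inter_subset_left
        _ = μ S := measure_toMeasurable S
    calc μ' S ≤ μ' T := measure_mono hST
      _ = ∫⁻ x in T, f x ∂μ := by rw [← hμ'wd, withDensity_apply _ hTm]
      _ ≤ ∫⁻ _ in T, (n : ℝ≥0∞) ∂μ := by
          refine setLIntegral_mono measurable_const ?_
          intro x hx
          exact (hT ▸ hx).2.2
      _ = (n : ℝ≥0∞) * μ T := by simp [mul_comm]
      _ ≤ (n : ℝ≥0∞) * μ S := by gcongr
  intro δ hδ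
  have hbound : ∀ s : ℝ, μ' (lamSet F (Bn n) δ s) ≤ (n : ℝ≥0∞) * μ (lamSet F A δ s) := by
    intro s
    refine (key _ (lamSet_subset_self F (Bn n) δ s)).trans ?_
    gcongr
    exact lamSet_mono F inter_subset_left δ s
  refine le_antisymm ?_ zero_le
  calc limsup (fun s : ℝ => μ' (lamSet F (Bn n) δ s)) atTop
      ≤ limsup (fun s : ℝ => (n : ℝ≥0∞) * μ (lamSet F A δ s)) atTop :=
        limsup_le_limsup (Eventually.of_forall hbound)
    _ = (n : ℝ≥0∞) * limsup (fun s : ℝ => μ (lamSet F A δ s)) atTop :=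
        ENNReal.limsup_const_mul_of_ne_top (by simp)
    _ = 0 := by rw [hA δ hδ, mul_zero]
end

section
/- Let {F_t} be the flow built under a positive measurable ceiling function ξ : X₀ → ℝ with base automorphism T on (X₀,𝔅₀,μ₀). Then {F_t} has Property B if and only if there exists a measurable set A₀ ⊆ X₀ of positive measure such that for all δ > 0, limsup_{s→∞} μ₀(Δ_{F,δ,s}(A₀)) = 0, where Δ_{F,δ,s}(A₀) = {x ∈ A₀ : ∃ t ∈ (e^{s-δ},e^{s+δ}) ∪ (−e^{s+δ},−e^{s-δ}), F_t(x,0) ∈ A₀ × {0}}. -/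
open MeasureTheory Filter Set
open scoped ENNReal Topology

/-- Property B of a flow `F` on a measure space `(X, μ)`. -/
def PropertyB {X : Type*} [MeasurableSpace X] (μ : Measure X) (F : ℝ → X → X) : Prop :=
  ∃ A : Set X, MeasurableSet A ∧ 0 < μ A ∧
    ∀ δ : ℝ, 0 < δ → limsup (fun s : ℝ => μ (lamSet F A δ s)) atTop = 0

/-- The base return set `Δ_{F,δ,s}(A₀)` for a flow built under a function:
points of `A₀` that return to `A₀ × {0}` at some time `t` with `e^{s-δ} < |t| < e^{s+δ}`. -/
def delSet {X₀ : Type*} (F : ℝ → X₀ × ℝ → X₀ × ℝ) (A₀ : Set X₀) (δ s : ℝ) : Set X₀ :=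
  {x | x ∈ A₀ ∧ ∃ t : ℝ, Real.exp (s - δ) < |t| ∧ |t| < Real.exp (s + δ) ∧
    (F t (x, 0)).1 ∈ A₀ ∧ (F t (x, 0)).2 = 0}

lemma limsup_zero_iff' {f : ℝ → ℝ≥0∞} :
    limsup f atTop = 0 ↔ Tendsto f atTop (𝓝 0) := by
  constructor
  · intro h
    refine tendsto_order.2 ⟨fun a ha => absurd ha (by simp), fun a ha => ?_⟩
    exact eventually_lt_of_limsup_lt (h ▸ ha)
  · exact fun h => h.limsup_eq

lemma exists_rat_interval {s : Set ℝ} (h0 : 0 < volume s) :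
    ∃ q : ℚ × ℚ, 0 < (q.2 : ℝ) ∧
      ENNReal.ofReal (2 * (q.2 : ℝ) / 3) ≤ volume (s ∩ Ico (q.1 : ℝ) (q.1 + q.2)) := by
  have hne : (volume.restrict s) ≠ 0 := by
    simp only [ne_eq, Measure.restrict_eq_zero]
    exact h0.ne'
  have hae := Besicovitch.ae_tendsto_measure_inter_div volume s
  obtain ⟨x, hx⟩ := (@ae_neBot _ _ (volume.restrict s)).2 hne |>.nonempty_of_mem hae
  have h34 : ENNReal.ofReal (3/4) < 1 := ENNReal.ofReal_lt_one.2 (by norm_num)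
  have hev : ∀ᶠ r in 𝓝[>] (0:ℝ),
      ENNReal.ofReal (3/4) < volume (s ∩ Metric.closedBall x r) / volume (Metric.closedBall x r) :=
    hx.eventually (eventually_gt_nhds h34)
  obtain ⟨r, hratio, hrpos⟩ := (hev.and self_mem_nhdsWithin).exists
  have hball : volume (Metric.closedBall x r) = ENNReal.ofReal (2 * r) := Real.volume_closedBall x r
  have hnum : ENNReal.ofReal (3 * r / 2) < volume (s ∩ Metric.closedBall x r) := by
    have := (ENNReal.lt_div_iff_mul_lt (Or.inl ?hb0) (Or.inl ?hbt)).1 hratio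
    · calc ENNReal.ofReal (3 * r / 2) = ENNReal.ofReal (3/4) * ENNReal.ofReal (2 * r) := by
            rw [← ENNReal.ofReal_mul (by norm_num)]; ring_nf
          _ = ENNReal.ofReal (3/4) * volume (Metric.closedBall x r) := by rw [hball]
          _ < volume (s ∩ Metric.closedBall x r) := this
    case hb0 => rw [hball]; simp [ENNReal.ofReal_pos.2 (by linarith : (0:ℝ) < 2 * r), ne_of_gt, hrpos]
    case hbt => rw [hball]; exact ENNReal.ofReal_ne_top
  have hIco : ENNReal.ofReal (3 * r / 2) ≤ volume (s ∩ Ico (x - r) (x + r)) := by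
    have hsub : s ∩ Metric.closedBall x r ⊆ (s ∩ Ico (x - r) (x + r)) ∪ {x + r} := by
      intro v ⟨hv1, hv2⟩
      rw [Real.closedBall_eq_Icc] at hv2
      rcases eq_or_lt_of_le hv2.2 with h | h
      · exact Or.inr (by simp [h])
      · exact Or.inl ⟨hv1, hv2.1, h⟩
    calc ENNReal.ofReal (3 * r / 2) ≤ volume (s ∩ Metric.closedBall x r) := hnum.le
      _ ≤ volume (s ∩ Ico (x - r) (x + r)) + volume ({x + r} : Set ℝ) :=
        le_trans (measure_mono hsub) (measure_union_le _ _)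
      _ = volume (s ∩ Ico (x - r) (x + r)) := by rw [Real.volume_singleton, add_zero]
  obtain ⟨u, hu1, hu2⟩ := exists_rat_btwn (show x - r - r/8 < x - r by linarith)
  obtain ⟨h, hh1, hh2⟩ := exists_rat_btwn (show 2*r + r/8 < 2*r + r/4 by linarith)
  refine ⟨(u, h), by linarith, ?_⟩
  have hsub2 : Ico (x - r) (x + r) ⊆ Ico (u : ℝ) (u + h) := by
    apply Ico_subset_Ico (le_of_lt hu2) (by push_cast; linarith)
  show ENNReal.ofReal (2 * (h : ℝ) / 3) ≤ volume (s ∩ Ico ((u:ℝ)) ((u:ℝ) + (h:ℝ)))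
  calc ENNReal.ofReal (2 * (h : ℝ) / 3) ≤ ENNReal.ofReal (3 * r / 2) := by
        apply ENNReal.ofReal_le_ofReal; nlinarith [hh2]
    _ ≤ volume (s ∩ Ico (x - r) (x + r)) := hIco
    _ ≤ volume (s ∩ Ico ((u:ℝ)) (u + h)) := measure_mono (inter_subset_inter_right _ hsub2)

private theorem fwd {X₀ : Type*} [MeasurableSpace X₀] (μ₀ : Measure X₀) [SigmaFinite μ₀]
    (ξ : X₀ → ℝ) (hξpos : ∀ x, 0 < ξ x) (hξm : Measurable ξ)
    (F : ℝ → X₀ × ℝ → X₀ × ℝ)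
    (hFadd : ∀ s t : ℝ, ∀ y, F (s + t) y = F s (F t y))
    (hloc : ∀ (x : X₀) (u t : ℝ), 0 ≤ u → 0 ≤ u + t → u + t < ξ x → F t (x, u) = (x, u + t))
    (Y : Set (X₀ × ℝ)) (hYdef : Y = {p : X₀ × ℝ | 0 ≤ p.2 ∧ p.2 < ξ p.1})
    (hYm : MeasurableSet Y)
    (A : Set (X₀ × ℝ)) (hAm : MeasurableSet A)
    (hApos : 0 < ((μ₀.prod volume).restrict Y) A)
    (hA : ∀ δ : ℝ, 0 < δ →
      limsup (fun s : ℝ => ((μ₀.prod volume).restrict Y) (lamSet F A δ s)) atTop = 0) :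
    ∃ A₀ : Set X₀, MeasurableSet A₀ ∧ 0 < μ₀ A₀ ∧
      ∀ δ : ℝ, 0 < δ → limsup (fun s : ℝ => μ₀ (delSet F A₀ δ s)) atTop = 0 := by
  have hYmem : ∀ p : X₀ × ℝ, p ∈ Y → 0 ≤ p.2 ∧ p.2 < ξ p.1 := by
    rw [hYdef]; exact fun p hp => hp
  set B := A ∩ Y with hB
  have hBm : MeasurableSet B := hAm.inter hYm
  have hBpos : 0 < (μ₀.prod volume) B := by rwa [Measure.restrict_apply' hYm] at hApos
  have hBY : B ⊆ Y := inter_subset_right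
  -- the candidate sets
  set C : ℚ → ℚ → Set (X₀ × ℝ) := fun u h => B ∩ (univ ×ˢ Ico (u:ℝ) ((u:ℝ)+(h:ℝ))) with hC
  have hCm : ∀ u h : ℚ, MeasurableSet (C u h) := fun u h =>
    hBm.inter (MeasurableSet.univ.prod measurableSet_Ico)
  set S : ℚ → ℚ → Set X₀ := fun u h =>
    {x | ENNReal.ofReal (2*(h:ℝ)/3) ≤ volume (Prod.mk x ⁻¹' C u h)} with hS
  have hSm : ∀ u h : ℚ, MeasurableSet (S u h) := fun u h =>
    measurableSet_le measurable_const (measurable_measure_prodMk_left (hCm u h))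
  -- find a good (u, h)
  obtain ⟨u, h, hhpos, hSpos⟩ : ∃ u h : ℚ, 0 < (h:ℝ) ∧ 0 < μ₀ (S u h) := by
    set P := {x | 0 < volume (Prod.mk x ⁻¹' B)} with hP
    have hslice : Measurable fun x => volume (Prod.mk x ⁻¹' B) :=
      measurable_measure_prodMk_left hBm
    have hPpos : 0 < μ₀ P := by
      by_contra hc
      push_neg at hc
      have h0 : μ₀ P = 0 := le_antisymm hc (zero_le)
      have hzero : (μ₀.prod volume) B = 0 := by
        rw [Measure.prod_apply hBm, lintegral_eq_zero_iff hslice]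
        rw [Filter.EventuallyEq, ae_iff]
        convert h0 using 2
        ext x
        simp [hP, pos_iff_ne_zero]
      exact absurd hzero hBpos.ne'
    have hcover : P ⊆ ⋃ q : ℚ × ℚ, ⋃ (_ : 0 < ((q.2:ℚ):ℝ)), S q.1 q.2 := by
      intro x hx
      obtain ⟨q, hq1, hq2⟩ := exists_rat_interval (s := Prod.mk x ⁻¹' B) hx
      refine mem_iUnion.2 ⟨q, mem_iUnion.2 ⟨hq1, ?_⟩⟩
      have hpre : Prod.mk x ⁻¹' C q.1 q.2
          = (Prod.mk x ⁻¹' B) ∩ Ico ((q.1:ℚ):ℝ) ((q.1:ℝ) + (q.2:ℝ)) := by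
        ext v
        simp [hC, and_assoc]
      show ENNReal.ofReal (2*((q.2:ℚ):ℝ)/3) ≤ volume (Prod.mk x ⁻¹' C q.1 q.2)
      rw [hpre]
      exact hq2
    by_contra hc
    push_neg at hc
    have hnull : μ₀ (⋃ q : ℚ × ℚ, ⋃ (_ : 0 < ((q.2:ℚ):ℝ)), S q.1 q.2) = 0 := by
      refine measure_iUnion_null fun q => measure_iUnion_null fun hq => ?_
      exact le_antisymm (hc q.1 q.2 hq) (zero_le)
    exact absurd (measure_mono_null hcover hnull) hPpos.ne'
  refine ⟨S u h, hSm u h, hSpos, ?_⟩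
  intro δ hδ
  rw [limsup_zero_iff']
  have hlam := limsup_zero_iff'.1 (hA δ hδ)
  set c := ENNReal.ofReal ((h:ℝ)/3) with hcdef
  have hc0 : c ≠ 0 := (ENNReal.ofReal_pos.2 (by linarith)).ne'
  have hct : c ≠ ⊤ := ENNReal.ofReal_ne_top
  have hbound : ∀ s : ℝ, μ₀ (delSet F (S u h) δ s) ≤
      ((μ₀.prod volume).restrict Y) (lamSet F A δ s) * c⁻¹ := by
    intro s
    set L := lamSet F B δ s with hL
    have hLA : (μ₀.prod volume) L ≤ ((μ₀.prod volume).restrict Y) (lamSet F A δ s) := by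
      rw [Measure.restrict_apply' hYm]
      refine measure_mono ?_
      rintro y ⟨hy, t, h1, h2, h3⟩
      exact ⟨⟨hy.1, t, h1, h2, h3.1⟩, hBY hy⟩
    set L' := toMeasurable (μ₀.prod volume) L with hL'
    have hL'm : MeasurableSet L' := measurableSet_toMeasurable _ _
    set f : X₀ → ℝ≥0∞ := fun x => volume (Prod.mk x ⁻¹' L') with hf
    have hfm : Measurable f := measurable_measure_prodMk_left hL'm
    have hfbig : delSet F (S u h) δ s ⊆ {x | c ≤ f x} := by
      rintro x ⟨hxS, t, ht1, ht2, hx'S, hx'0⟩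
      set x' := (F t (x,0)).1 with hx'
      have hFt : F t (x, 0) = (x', 0) := Prod.ext rfl hx'0
      -- the intersection set
      set D := (Prod.mk x ⁻¹' C u h) ∩ (Prod.mk x' ⁻¹' C u h) with hD
      have hDvol : c ≤ volume D := by
        have hunion : (Prod.mk x ⁻¹' C u h) ∪ (Prod.mk x' ⁻¹' C u h) ⊆ Ico ((u:ℚ):ℝ) ((u:ℝ)+(h:ℝ)) := by
          rintro v (hv | hv) <;> exact hv.2.2
        have hkey : volume ((Prod.mk x ⁻¹' C u h) ∪ (Prod.mk x' ⁻¹' C u h)) + volume D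
            = volume (Prod.mk x ⁻¹' C u h) + volume (Prod.mk x' ⁻¹' C u h) :=
          measure_union_add_inter _ (measurable_prodMk_left (hCm u h))
        have h1 : ENNReal.ofReal (2*(h:ℝ)/3) ≤ volume (Prod.mk x ⁻¹' C u h) := hxS
        have h2 : ENNReal.ofReal (2*(h:ℝ)/3) ≤ volume (Prod.mk x' ⁻¹' C u h) := hx'S
        have hIvol : volume ((Prod.mk x ⁻¹' C u h) ∪ (Prod.mk x' ⁻¹' C u h))
            ≤ ENNReal.ofReal (h:ℝ) := by
          refine le_trans (measure_mono hunion) ?_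
          rw [Real.volume_Ico]
          exact ENNReal.ofReal_le_ofReal (by linarith)
        have hle : c + ENNReal.ofReal (h:ℝ) ≤ volume D + ENNReal.ofReal (h:ℝ) := by
          calc c + ENNReal.ofReal (h:ℝ)
              = ENNReal.ofReal (2*(h:ℝ)/3) + ENNReal.ofReal (2*(h:ℝ)/3) := by
                rw [hcdef, ← ENNReal.ofReal_add (by linarith) (by linarith),
                  ← ENNReal.ofReal_add (by linarith) (by linarith)]
                ring_nf
            _ ≤ volume (Prod.mk x ⁻¹' C u h) + volume (Prod.mk x' ⁻¹' C u h) :=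
                add_le_add h1 h2
            _ = volume ((Prod.mk x ⁻¹' C u h) ∪ (Prod.mk x' ⁻¹' C u h)) + volume D := hkey.symm
            _ ≤ volume D + ENNReal.ofReal (h:ℝ) := by
                rw [add_comm]
                exact add_le_add le_rfl hIvol
        exact (ENNReal.add_le_add_iff_right ENNReal.ofReal_ne_top).1 hle
      have hDL : D ⊆ Prod.mk x ⁻¹' L := by
        rintro v ⟨hv1, hv2⟩
        have hxvB : (x, v) ∈ B := hv1.1
        have hx'vB : (x', v) ∈ B := hv2.1
        have hv0 : 0 ≤ v := (hYmem _ (hBY hxvB)).1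
        have hvx : v < ξ x := (hYmem _ (hBY hxvB)).2
        have hvx' : v < ξ x' := (hYmem _ (hBY hx'vB)).2
        have hFv : F v (x, 0) = (x, v) := by
          simpa using hloc x 0 v le_rfl (by simpa using hv0) (by simpa using hvx)
        have hFv' : F v (x', 0) = (x', v) := by
          simpa using hloc x' 0 v le_rfl (by simpa using hv0) (by simpa using hvx')
        have hmove : F t (x, v) = (x', v) := by
          calc F t (x, v) = F t (F v (x, 0)) := by rw [hFv]
            _ = F (t + v) (x, 0) := (hFadd t v _).symm
            _ = F (v + t) (x, 0) := by rw [add_comm]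
            _ = F v (F t (x, 0)) := hFadd v t _
            _ = F v (x', 0) := by rw [hFt]
            _ = (x', v) := hFv'
        exact ⟨hxvB, t, ht1, ht2, by rw [hmove]; exact hx'vB⟩
      have : c ≤ f x :=
        le_trans hDvol (measure_mono (hDL.trans (preimage_mono (subset_toMeasurable _ _))))
      exact this
    -- Markov inequality
    have hmarkov := mul_meas_ge_le_lintegral₀ (μ := μ₀) hfm.aemeasurable c
    have hint : ∫⁻ x, f x ∂μ₀ = (μ₀.prod volume) L' := (Measure.prod_apply hL'm).symm
    have hstep : μ₀ (delSet F (S u h) δ s) * c ≤ (μ₀.prod volume) L := by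
      calc μ₀ (delSet F (S u h) δ s) * c ≤ μ₀ {x | c ≤ f x} * c :=
            mul_le_mul_left (measure_mono hfbig) c
        _ = c * μ₀ {x | c ≤ f x} := mul_comm _ _
        _ ≤ ∫⁻ x, f x ∂μ₀ := hmarkov
        _ = (μ₀.prod volume) L' := hint
        _ = (μ₀.prod volume) L := measure_toMeasurable L
    calc μ₀ (delSet F (S u h) δ s)
        = μ₀ (delSet F (S u h) δ s) * c * c⁻¹ := by
          rw [mul_assoc, ENNReal.mul_inv_cancel hc0 hct, mul_one]
      _ ≤ (μ₀.prod volume) L * c⁻¹ := mul_le_mul_left hstep _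
      _ ≤ ((μ₀.prod volume).restrict Y) (lamSet F A δ s) * c⁻¹ := mul_le_mul_left hLA _
  refine tendsto_of_tendsto_of_tendsto_of_le_of_le tendsto_const_nhds ?_
    (fun s => zero_le) hbound
  have := ENNReal.Tendsto.mul_const hlam (b := c⁻¹) (Or.inr (ENNReal.inv_ne_top.2 hc0))
  simpa using this

private theorem back {X₀ : Type*} [MeasurableSpace X₀] (μ₀ : Measure X₀) [SigmaFinite μ₀]
    (ξ : X₀ → ℝ) (hξpos : ∀ x, 0 < ξ x) (hξm : Measurable ξ)
    (F : ℝ → X₀ × ℝ → X₀ × ℝ)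
    (hFadd : ∀ s t : ℝ, ∀ y, F (s + t) y = F s (F t y))
    (hloc : ∀ (x : X₀) (u t : ℝ), 0 ≤ u → 0 ≤ u + t → u + t < ξ x → F t (x, u) = (x, u + t))
    (Y : Set (X₀ × ℝ)) (hYdef : Y = {p : X₀ × ℝ | 0 ≤ p.2 ∧ p.2 < ξ p.1})
    (hYm : MeasurableSet Y)
    (A₀ : Set X₀) (hA₀m : MeasurableSet A₀) (hA₀pos : 0 < μ₀ A₀)
    (hA₀ : ∀ δ : ℝ, 0 < δ → limsup (fun s : ℝ => μ₀ (delSet F A₀ δ s)) atTop = 0) :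
    ∃ A : Set (X₀ × ℝ), MeasurableSet A ∧ 0 < ((μ₀.prod volume).restrict Y) A ∧
      ∀ δ : ℝ, 0 < δ →
        limsup (fun s : ℝ => ((μ₀.prod volume).restrict Y) (lamSet F A δ s)) atTop = 0 := by
  subst hYdef
  -- find ε with positive measure of {x ∈ A₀ | ε ≤ ξ x}
  obtain ⟨n, hn⟩ : ∃ n : ℕ, 0 < μ₀ (A₀ ∩ {x | 1/(n+1 : ℝ) ≤ ξ x}) := by
    by_contra hc
    push_neg at hc
    simp only [le_zero_iff] at hc
    have hcov : A₀ ⊆ ⋃ n : ℕ, A₀ ∩ {x | 1/(n+1:ℝ) ≤ ξ x} := by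
      intro x hx
      obtain ⟨n, hn⟩ := exists_nat_one_div_lt (hξpos x)
      exact mem_iUnion.2 ⟨n, hx, hn.le⟩
    exact absurd (measure_mono_null hcov (measure_iUnion_null fun n => hc n)) hA₀pos.ne'
  set ε : ℝ := 1/(n+1:ℝ) with hε
  have hεpos : 0 < ε := by positivity
  set A₀' := A₀ ∩ {x | ε ≤ ξ x} with hA₀'
  have hA₀'m : MeasurableSet A₀' := hA₀m.inter (measurableSet_le measurable_const hξm)
  have hsubY : A₀' ×ˢ Ico (0:ℝ) ε ⊆ {p : X₀ × ℝ | 0 ≤ p.2 ∧ p.2 < ξ p.1} := by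
    rintro ⟨x, v⟩ ⟨hx, hv⟩
    exact ⟨hv.1, lt_of_lt_of_le hv.2 hx.2⟩
  refine ⟨A₀' ×ˢ Ico 0 ε, hA₀'m.prod measurableSet_Ico, ?_, ?_⟩
  · rw [Measure.restrict_apply' hYm, inter_eq_self_of_subset_left hsubY, Measure.prod_prod,
      Real.volume_Ico, sub_zero]
    exact ENNReal.mul_pos hn.ne' (ENNReal.ofReal_pos.2 hεpos).ne'
  · intro δ hδ
    rw [limsup_zero_iff']
    have h2δ := limsup_zero_iff'.1 (hA₀ (2*δ) (by linarith))
    -- eventual thresholds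
    have e1 : Tendsto (fun s => Real.exp (s - δ) - Real.exp (s - 2*δ)) atTop atTop := by
      have heq : (fun s => Real.exp (s - δ) - Real.exp (s - 2*δ))
          = fun s => Real.exp s * (Real.exp (-δ) - Real.exp (-(2*δ))) := by
        funext s
        rw [sub_eq_add_neg s δ, sub_eq_add_neg s (2*δ), Real.exp_add, Real.exp_add]
        ring
      rw [heq]
      exact Real.tendsto_exp_atTop.atTop_mul_const
        (sub_pos.2 (Real.exp_lt_exp.2 (by linarith)))
    have e2 : Tendsto (fun s => Real.exp (s + 2*δ) - Real.exp (s + δ)) atTop atTop := by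
      have heq : (fun s => Real.exp (s + 2*δ) - Real.exp (s + δ))
          = fun s => Real.exp s * (Real.exp (2*δ) - Real.exp δ) := by
        funext s
        rw [Real.exp_add, Real.exp_add]
        ring
      rw [heq]
      exact Real.tendsto_exp_atTop.atTop_mul_const
        (sub_pos.2 (Real.exp_lt_exp.2 (by linarith)))
    have hkey : ∀ᶠ s in atTop,
        ((μ₀.prod volume).restrict {p : X₀ × ℝ | 0 ≤ p.2 ∧ p.2 < ξ p.1})
            (lamSet F (A₀' ×ˢ Ico 0 ε) δ s)
          ≤ μ₀ (delSet F A₀ (2*δ) s) * ENNReal.ofReal ε := by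
      filter_upwards [e1.eventually_gt_atTop ε, e2.eventually_gt_atTop ε] with s hs1 hs2
      have hsub : lamSet F (A₀' ×ˢ Ico 0 ε) δ s ⊆ (delSet F A₀ (2*δ) s) ×ˢ Ico (0:ℝ) ε := by
        rintro ⟨x, v⟩ ⟨⟨hx, hv⟩, t, ht1, ht2, htA⟩
        have hp1 : (F t (x, v)).1 ∈ A₀' := htA.1
        have hp2 : (F t (x, v)).2 ∈ Ico (0:ℝ) ε := htA.2
        set p := F t (x, v) with hp
        -- flow computations
        have hxv : F v (x, 0) = (x, v) := by
          have := hloc x 0 v le_rfl (by simpa using hv.1)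
            (by simpa using lt_of_lt_of_le hv.2 hx.2)
          simpa using this
        have hp0 : F (-p.2) p = (p.1, 0) := by
          have := hloc p.1 p.2 (-p.2) hp2.1 (by simp) (by simpa using hξpos p.1)
          simpa using this
        set t' : ℝ := -p.2 + (t + v) with ht'
        have hcomp : F t' (x, 0) = (p.1, 0) := by
          rw [ht', hFadd, hFadd, hxv, ← hp, hp0]
        -- time bounds
        have habs : |t' - t| < ε := by
          rw [ht']
          have h1 : 0 ≤ v := hv.1
          have h2 : v < ε := hv.2
          have h3 : 0 ≤ p.2 := hp2.1
          have h4 : p.2 < ε := hp2.2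
          rw [abs_lt]; constructor <;> [skip; skip] <;> nlinarith [abs_nonneg t]
        have h5 : |t| - |t'| ≤ |t' - t| := by
          rw [abs_sub_comm]; exact abs_sub_abs_le_abs_sub t t'
        have h6 : |t'| - |t| ≤ |t' - t| := abs_sub_abs_le_abs_sub t' t
        have hb1 : Real.exp (s - 2*δ) < |t'| := by linarith
        have hb2 : |t'| < Real.exp (s + 2*δ) := by linarith
        refine ⟨⟨hx.1, t', hb1, hb2, ?_, ?_⟩, hv⟩
        · rw [hcomp]; exact hp1.1
        · rw [hcomp]
      calc ((μ₀.prod volume).restrict {p : X₀ × ℝ | 0 ≤ p.2 ∧ p.2 < ξ p.1})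
            (lamSet F (A₀' ×ˢ Ico 0 ε) δ s)
          ≤ (μ₀.prod volume) (lamSet F (A₀' ×ˢ Ico 0 ε) δ s) :=
            Measure.le_iff'.1 Measure.restrict_le_self _
        _ ≤ (μ₀.prod volume) ((delSet F A₀ (2*δ) s) ×ˢ Ico (0:ℝ) ε) := measure_mono hsub
        _ ≤ μ₀ (delSet F A₀ (2*δ) s) * ENNReal.ofReal ε := by
            rw [Measure.prod_prod, Real.volume_Ico, sub_zero]
    refine tendsto_of_tendsto_of_tendsto_of_le_of_le' tendsto_const_nhds ?_
      (Eventually.of_forall fun s => zero_le) hkey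
    have := ENNReal.Tendsto.mul_const h2δ (b := ENNReal.ofReal ε) (Or.inr ENNReal.ofReal_ne_top)
    simpa using this

theorem stmt_3 {X₀ : Type*} [MeasurableSpace X₀] (μ₀ : Measure X₀) [SigmaFinite μ₀]
    (T : X₀ → X₀) (hT : Measurable T)
    (ξ : X₀ → ℝ) (hξpos : ∀ x, 0 < ξ x) (hξm : Measurable ξ)
    (F : ℝ → X₀ × ℝ → X₀ × ℝ)
    (hFmeas : Measurable (fun p : ℝ × (X₀ × ℝ) => F p.1 p.2))
    (hF0 : ∀ y, F 0 y = y)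
    (hFadd : ∀ s t : ℝ, ∀ y, F (s + t) y = F s (F t y))
    (hloc : ∀ (x : X₀) (u t : ℝ), 0 ≤ u → 0 ≤ u + t → u + t < ξ x → F t (x, u) = (x, u + t))
    (hjump : ∀ x : X₀, F (ξ x) (x, 0) = (T x, 0)) :
    PropertyB ((μ₀.prod volume).restrict {p : X₀ × ℝ | 0 ≤ p.2 ∧ p.2 < ξ p.1}) F ↔
      ∃ A₀ : Set X₀, MeasurableSet A₀ ∧ 0 < μ₀ A₀ ∧
        ∀ δ : ℝ, 0 < δ → limsup (fun s : ℝ => μ₀ (delSet F A₀ δ s)) atTop = 0 := by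
  have hYm : MeasurableSet {p : X₀ × ℝ | 0 ≤ p.2 ∧ p.2 < ξ p.1} :=
    (measurableSet_le measurable_const measurable_snd).inter
      (measurableSet_lt measurable_snd (hξm.comp measurable_fst))
  constructor
  · rintro ⟨A, hAm, hApos, hA⟩
    exact fwd μ₀ ξ hξpos hξm F hFadd hloc _ rfl hYm A hAm hApos hA
  · rintro ⟨A₀, h1, h2, h3⟩
    exact back μ₀ ξ hξpos hξm F hFadd hloc _ rfl hYm A₀ h1 h2 h3
end

section
/- Let ℛ be an ergodic hyperfinite equivalence relation of type III₀ on (X,𝔅,μ) with μ lacunary, δ its Radon–Nikodym cocycle, and let {F_t} be the associated flow of ℛ realized as the flow built under the ceiling function ξ(z) = min{log δ(x',x) : (x',x) ∈ ℛ, log δ(x',x) > 0} with base automorphism T on the space X₀ of ergodic components of the sub-relation 𝒮 = {(x,y) ∈ ℛ : δ(x,y) = 1}, with quotient map π : X → X₀. Then for any (x,x') ∈ ℛ, writing z = π(x), z' = π(x'), one has F_{log δ(x',x)}(z,0) = (z',0). -/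
open MeasureTheory Filter Set

/-- For an ergodic equivalence relation `Rel` with (logarithmic) Radon–Nikodym cocycle `c`
(with respect to a lacunary measure), the associated flow `F` built under the ceiling
function `ξ` with base automorphism `T` on the space `X₀` of ergodic components of the
sub-relation `{δ = 1}` (with quotient map `π`) satisfies
`F_{log δ(x',x)}(π x, 0) = (π x', 0)` for every `(x, x') ∈ Rel`. -/
theorem stmt_5 {X X₀ : Type*}
    (Rel : X → X → Prop) (hRel : Equivalence Rel)
    (c : X → X → ℝ)
    (hcocycle : ∀ x y z, Rel x y → Rel y z → c x z = c x y + c y z)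
    (hlac : ∃ ε : ℝ, 0 < ε ∧ ∀ x y, Rel x y → c x y = 0 ∨ ε < |c x y|)
    (π : X → X₀)
    (hπ : ∀ x y, Rel x y → c x y = 0 → π x = π y)
    (hπsur : Function.Surjective π)
    (ξ : X₀ → ℝ)
    (hξ : ∀ x : X, IsLeast {r : ℝ | 0 < r ∧ ∃ x', Rel x' x ∧ c x' x = r} (ξ (π x)))
    (T : X₀ → X₀)
    (hT : ∀ x x', Rel x' x → c x' x = ξ (π x) → π x' = T (π x))
    (F : ℝ → X₀ × ℝ → X₀ × ℝ)
    (hF0 : ∀ y, F 0 y = y)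
    (hFadd : ∀ s t : ℝ, ∀ y, F (s + t) y = F s (F t y))
    (hjump : ∀ z : X₀, F (ξ z) (z, 0) = (T z, 0)) :
    ∀ x x' : X, Rel x' x → F (c x' x) (π x, (0 : ℝ)) = (π x', 0) := by
  obtain ⟨ε, hε, hlac⟩ := hlac
  have hc0 : ∀ x, c x x = 0 := fun x => by
    have := hcocycle x x x (hRel.refl x) (hRel.refl x); linarith
  have hneg : ∀ x y, Rel x y → c y x = - c x y := by
    intro x y h
    have := hcocycle x y x h (hRel.symm h)
    rw [hc0] at this; linarith
  have key : ∀ n : ℕ, ∀ x x' : X, Rel x' x → 0 ≤ c x' x → c x' x ≤ n * ε →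
      F (c x' x) (π x, (0:ℝ)) = (π x', 0) := by
    intro n
    induction n with
    | zero =>
      intro x x' h h0 hle
      have hz : c x' x = 0 := le_antisymm (by simpa using hle) h0
      rw [hz, hF0, hπ x' x h hz]
    | succ n ih =>
      intro x x' h h0 hle
      rcases eq_or_lt_of_le h0 with heq | hpos
      · rw [← heq, hF0, hπ x' x h heq.symm]
      · obtain ⟨⟨hξpos, x₁, hx₁, hcx₁⟩, hlb⟩ := hξ x
        have hle1 : ξ (π x) ≤ c x' x := hlb ⟨hpos, x', h, rfl⟩
        have hεξ : ε < ξ (π x) := by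
          rcases hlac x₁ x hx₁ with h0' | h'
          · rw [hcx₁] at h0'; linarith
          · rw [hcx₁, abs_of_pos hξpos] at h'; exact h'
        have hrel1 : Rel x' x₁ := hRel.trans h (hRel.symm hx₁)
        have hsplit : c x' x = c x' x₁ + c x₁ x := hcocycle x' x₁ x hrel1 hx₁
        have hT1 : π x₁ = T (π x) := hT x x₁ hx₁ hcx₁
        have step : F (c x' x) (π x, (0:ℝ)) = F (c x' x₁) (π x₁, 0) := by
          rw [hsplit, hFadd, hcx₁, hjump, hT1]
        rw [step]
        rw [hcx₁] at hsplit
        apply ih x₁ x' hrel1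
        · linarith
        · push_cast at hle ⊢; linarith
  intro x x' h
  rcases le_or_gt 0 (c x' x) with h0 | h0
  · obtain ⟨n, hn⟩ := exists_nat_gt (c x' x / ε)
    apply key n x x' h h0
    rw [div_lt_iff₀ hε] at hn; linarith
  · have hsym : c x x' = - c x' x := hneg x' x h
    have hrev : Rel x x' := hRel.symm h
    obtain ⟨n, hn⟩ := exists_nat_gt (c x x' / ε)
    have hk := key n x' x hrev (by linarith) (by rw [div_lt_iff₀ hε] at hn; linarith)
    calc F (c x' x) (π x, (0:ℝ)) = F (c x' x) (F (c x x') (π x', 0)) := by rw [hk]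
    _ = F (c x' x + c x x') (π x', 0) := (hFadd _ _ _).symm
    _ = (π x', 0) := by rw [hsym, add_neg_cancel, hF0]
end

section
/- Let T be a nonsingular automorphism of (X,𝔅,μ). If there exists a positive-measure set A ⊆ X such that for every δ > 0, limsup_{s→∞} μ({x ∈ A : ∃ n ∈ ℤ with e^{s-δ} < |n| < e^{s+δ} and T^n x ∈ A}) = 0, then the flow built under the constant function 1 with base automorphism T has Property B. -/
open MeasureTheory Filter Set
open scoped ENNReal

/-- The flow built under the constant function `1` with base automorphism `T`,
on `X × [0,1)`: `F_t(x,s) = (T^⌊t+s⌋ x, {t+s})`. -/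
noncomputable def constFlow {X : Type*} (T : Equiv.Perm X) (t : ℝ) (p : X × ℝ) : X × ℝ :=
  ((T ^ ⌊t + p.2⌋) p.1, Int.fract (t + p.2))

theorem stmt_7 {X : Type*} [MeasurableSpace X] (μ : Measure X) [SigmaFinite μ]
    (T : Equiv.Perm X) (hTmeas : Measurable T) (hTmeas' : Measurable T.symm)
    (hTns : Measure.QuasiMeasurePreserving T μ μ)
    (hTns' : Measure.QuasiMeasurePreserving T.symm μ μ)
    (A : Set X) (hAm : MeasurableSet A) (hApos : 0 < μ A)
    (hA : ∀ δ : ℝ, 0 < δ →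
      limsup (fun s : ℝ => μ {x | x ∈ A ∧ ∃ n : ℤ,
        Real.exp (s - δ) < |(n : ℝ)| ∧ |(n : ℝ)| < Real.exp (s + δ) ∧ (T ^ n) x ∈ A})
        atTop = 0) :
    PropertyB ((μ.prod volume).restrict (Set.univ ×ˢ Set.Ico (0 : ℝ) 1))
      (constFlow T) := by
  refine ⟨A ×ˢ Set.Ico (0:ℝ) (1/2), hAm.prod measurableSet_Ico, ?_, ?_⟩
  · rw [Measure.restrict_apply (hAm.prod measurableSet_Ico),
      Set.inter_eq_left.mpr
        (Set.prod_mono (Set.subset_univ A) (Set.Ico_subset_Ico le_rfl (by norm_num))),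
      Measure.prod_prod]
    have hv : (0:ℝ≥0∞) < volume (Set.Ico (0:ℝ) (1/2)) := by
      rw [Real.volume_Ico]
      exact ENNReal.ofReal_pos.mpr (by norm_num)
    exact ENNReal.mul_pos hApos.ne' hv.ne'
  · intro δ hδ
    have hc : (0:ℝ) < Real.exp δ - 1 := by
      have := Real.add_one_le_exp δ
      linarith
    have hev : ∀ᶠ σ in atTop,
        ((μ.prod volume).restrict (Set.univ ×ˢ Set.Ico (0:ℝ) 1))
          (lamSet (constFlow T) (A ×ˢ Set.Ico (0:ℝ) (1/2)) δ σ)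
        ≤ μ {x | x ∈ A ∧ ∃ n : ℤ,
            Real.exp (σ - 2*δ) < |(n : ℝ)| ∧ |(n : ℝ)| < Real.exp (σ + 2*δ) ∧ (T ^ n) x ∈ A} := by
      have htend : Tendsto (fun σ : ℝ => Real.exp (σ - 2*δ)) atTop atTop :=
        Real.tendsto_exp_atTop.comp (tendsto_atTop_add_const_right _ _ tendsto_id)
      filter_upwards [htend.eventually_ge_atTop (1/(Real.exp δ - 1))] with σ hσ
      have h1 : 1 ≤ Real.exp (σ - 2*δ) * (Real.exp δ - 1) := by
        rw [div_le_iff₀ hc] at hσ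
        linarith
      have hlow : Real.exp (σ - 2*δ) ≤ Real.exp (σ - δ) - 1 := by
        have hx : Real.exp (σ - δ) = Real.exp (σ - 2*δ) * Real.exp δ := by
          rw [← Real.exp_add]; ring_nf
        nlinarith
      have hhigh : Real.exp (σ + δ) + 1 ≤ Real.exp (σ + 2*δ) := by
        have e1 : Real.exp (σ + 2*δ) = Real.exp (σ + δ) * Real.exp δ := by
          rw [← Real.exp_add]; ring_nf
        have e2 : Real.exp (σ - 2*δ) ≤ Real.exp (σ + δ) := Real.exp_le_exp.mpr (by linarith)
        nlinarith
      have hsub : lamSet (constFlow T) (A ×ˢ Set.Ico (0:ℝ) (1/2)) δ σ ⊆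
          {x | x ∈ A ∧ ∃ n : ℤ,
            Real.exp (σ - 2*δ) < |(n : ℝ)| ∧ |(n : ℝ)| < Real.exp (σ + 2*δ) ∧ (T ^ n) x ∈ A}
            ×ˢ Set.Ico (0:ℝ) (1/2) := by
        rintro ⟨x, s⟩ ⟨hy, t, ht1, ht2, hFt⟩
        have hxA : x ∈ A := hy.1
        have hs : s ∈ Set.Ico (0:ℝ) (1/2) := hy.2
        have hTx : (T ^ ⌊t + s⌋) x ∈ A := hFt.1
        have hfr : Int.fract (t + s) ∈ Set.Ico (0:ℝ) (1/2) := hFt.2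
        set n : ℤ := ⌊t + s⌋ with hn
        have hdiff : |t - (n:ℝ)| < 1 := by
          have heq : t - (n:ℝ) = Int.fract (t + s) - s := by
            rw [Int.fract]; push_cast [hn]; ring
          rw [heq, abs_lt]
          have h1 := hfr.1; have h2 := hfr.2
          have h3 := hs.1; have h4 := hs.2
          constructor <;> linarith
        have habs1 : |t| ≤ |(n:ℝ)| + |t - (n:ℝ)| := by
          have h := abs_add_le ((n:ℝ)) (t - (n:ℝ))
          simpa using h
        have habs2 : |(n:ℝ)| ≤ |t| + |t - (n:ℝ)| := by
          have h := abs_add_le t ((n:ℝ) - t)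
          rw [abs_sub_comm t (n:ℝ)]
          simpa using h
        exact ⟨⟨hxA, n, by linarith, by linarith, hTx⟩, hs⟩
      calc ((μ.prod volume).restrict (Set.univ ×ˢ Set.Ico (0:ℝ) 1))
            (lamSet (constFlow T) (A ×ˢ Set.Ico (0:ℝ) (1/2)) δ σ)
          ≤ ((μ.prod volume).restrict (Set.univ ×ˢ Set.Ico (0:ℝ) 1))
            ({x | x ∈ A ∧ ∃ n : ℤ,
              Real.exp (σ - 2*δ) < |(n : ℝ)| ∧ |(n : ℝ)| < Real.exp (σ + 2*δ) ∧ (T ^ n) x ∈ A}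
              ×ˢ Set.Ico (0:ℝ) (1/2)) := measure_mono hsub
        _ ≤ (μ.prod volume)
            ({x | x ∈ A ∧ ∃ n : ℤ,
              Real.exp (σ - 2*δ) < |(n : ℝ)| ∧ |(n : ℝ)| < Real.exp (σ + 2*δ) ∧ (T ^ n) x ∈ A}
              ×ˢ Set.Ico (0:ℝ) (1/2)) := by
            rw [Measure.restrict_apply' ((MeasurableSet.univ).prod measurableSet_Ico)]
            exact measure_mono Set.inter_subset_left
        _ = μ {x | x ∈ A ∧ ∃ n : ℤ,
              Real.exp (σ - 2*δ) < |(n : ℝ)| ∧ |(n : ℝ)| < Real.exp (σ + 2*δ) ∧ (T ^ n) x ∈ A}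
              * volume (Set.Ico (0:ℝ) (1/2)) := Measure.prod_prod _ _
        _ ≤ μ {x | x ∈ A ∧ ∃ n : ℤ,
              Real.exp (σ - 2*δ) < |(n : ℝ)| ∧ |(n : ℝ)| < Real.exp (σ + 2*δ) ∧ (T ^ n) x ∈ A}
              * 1 := by
            refine mul_le_mul_right ?_ _
            rw [Real.volume_Ico]
            exact ENNReal.ofReal_le_one.mpr (by norm_num)
        _ = _ := mul_one _
    refine le_antisymm ?_ (zero_le)
    calc limsup (fun σ : ℝ => ((μ.prod volume).restrict (Set.univ ×ˢ Set.Ico (0:ℝ) 1))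
            (lamSet (constFlow T) (A ×ˢ Set.Ico (0:ℝ) (1/2)) δ σ)) atTop
        ≤ limsup (fun σ : ℝ => μ {x | x ∈ A ∧ ∃ n : ℤ,
            Real.exp (σ - 2*δ) < |(n : ℝ)| ∧ |(n : ℝ)| < Real.exp (σ + 2*δ) ∧ (T ^ n) x ∈ A})
            atTop := limsup_le_limsup hev
      _ = 0 := hA (2*δ) (by linarith)
end

section
/- Let z_n = 2^n − 1 for n ≥ 1, X = ∏_{n≥1} {0,1,…,z_n} with product measure μ = ⊗ μ_n where μ_n(i) = 2^{−n} for each i ∈ {0,…,z_n}, and let T be the odometer on X: (Tx)_n = 0 if n < N(x), x_n + 1 if n = N(x), x_n if n > N(x), where N(x) = min{n ≥ 1 : x_n < z_n}. Then T is nonsingular and ergodic with respect to μ. -/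
open MeasureTheory Filter Set
open scoped ENNReal Classical

/-- The product space `X = ∏_{n≥1} {0,1,…,2^n−1}` (coordinate `n : ℕ` here corresponds
to the paper's coordinate `n+1`, with `2^(n+1)` values). -/
abbrev OdoSpace : Type := (n : ℕ) → Fin (2 ^ (n + 1))

/-- `N(x) - 1`: the (0-based) index of the first coordinate of `x` that is not maximal
(junk value `0` if all coordinates are maximal). -/
noncomputable def Nfind (x : OdoSpace) : ℕ :=
  if h : ∃ n, (x n : ℕ) < 2 ^ (n + 1) - 1 then Nat.find h else 0

/-- The odometer ("add 1 with carry") on `OdoSpace`. -/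
noncomputable def odometer (x : OdoSpace) : OdoSpace :=
  if h : ∃ n, (x n : ℕ) < 2 ^ (n + 1) - 1 then
    fun n =>
      if n < Nat.find h then 0
      else if hn : n = Nat.find h then
        ⟨(x n : ℕ) + 1, by
          have h1 := Nat.find_spec h
          rw [← hn] at h1
          have h2 : 1 ≤ 2 ^ (n + 1) := Nat.one_le_two_pow
          omega⟩
      else x n
  else x

/-- The inverse odometer ("subtract 1 with borrow") on `OdoSpace`. -/
noncomputable def odometerInv (x : OdoSpace) : OdoSpace :=
  if h : ∃ n, 0 < (x n : ℕ) then
    fun n =>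
      if n < Nat.find h then
        ⟨2 ^ (n + 1) - 1, by
          have h2 : 1 ≤ 2 ^ (n + 1) := Nat.one_le_two_pow
          omega⟩
      else if n = Nat.find h then
        ⟨(x n : ℕ) - 1, lt_of_le_of_lt (Nat.sub_le _ _) (x n).isLt⟩
      else x n
  else x

/-- `K_n = 1!·2!⋯n!`. -/
def Kfac (n : ℕ) : ℕ := ∏ i ∈ Finset.Icc 1 n, Nat.factorial i

/-- The ceiling function `f(x) = K_{2^{N+1}+x_{N+1}}` (in the paper's 1-based indexing),
where `N = N(x)`. -/
noncomputable def ff (x : OdoSpace) : ℕ :=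
  Kfac (2 ^ (Nfind x + 2) + (x (Nfind x + 1) : ℕ))

namespace OdoAux

abbrev Word (k : ℕ) := (n : Fin k) → Fin (2 ^ ((n : ℕ) + 1))

def Cyl (k : ℕ) (a : Word k) : Set OdoSpace := {x : OdoSpace | ∀ n : Fin k, x (n : ℕ) = a n}

lemma one_le_pow (m : ℕ) : 1 ≤ 2 ^ (m + 1) := Nat.one_le_two_pow

/-- subtract one with borrow, on finite words -/
noncomputable def predW {k : ℕ} (a : Word k) : Word k := fun n =>
  if ∀ i : Fin k, i ≤ n → (a i : ℕ) = 0 then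
    ⟨2 ^ ((n : ℕ) + 1) - 1, by have := one_le_pow (n : ℕ); omega⟩
  else if ∀ i : Fin k, i < n → (a i : ℕ) = 0 then
    ⟨(a n : ℕ) - 1, lt_of_le_of_lt (Nat.sub_le _ _) (a n).isLt⟩
  else a n

lemma odometer_val_lt (x : OdoSpace) (h : ∃ n, (x n : ℕ) < 2 ^ (n + 1) - 1) {n : ℕ}
    (hn : n < Nat.find h) : (odometer x n : ℕ) = 0 := by
  rw [odometer, dif_pos h]; simp [hn]

lemma odometer_val_eq (x : OdoSpace) (h : ∃ n, (x n : ℕ) < 2 ^ (n + 1) - 1) {n : ℕ}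
    (hn : n = Nat.find h) : (odometer x n : ℕ) = (x n : ℕ) + 1 := by
  subst hn; rw [odometer, dif_pos h]; simp

lemma odometer_val_gt (x : OdoSpace) (h : ∃ n, (x n : ℕ) < 2 ^ (n + 1) - 1) {n : ℕ}
    (hn : Nat.find h < n) : odometer x n = x n := by
  rw [odometer, dif_pos h]; simp [Nat.lt_asymm hn, (Nat.ne_of_gt hn)]

lemma odometer_of_max (x : OdoSpace) (h : ¬ ∃ n, (x n : ℕ) < 2 ^ (n + 1) - 1) :
    odometer x = x := by rw [odometer, dif_neg h]

lemma coord_max (x : OdoSpace) (h : ∃ n, (x n : ℕ) < 2 ^ (n + 1) - 1) {i : ℕ}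
    (hi : i < Nat.find h) : (x i : ℕ) = 2 ^ (i + 1) - 1 := by
  have := Nat.find_min h hi
  have := (x i).isLt
  omega

/-- The fundamental combinatorial fact: off the single "all maximal" point, the odometer
preimage of the cylinder of `a` is the cylinder of `predW a`. -/
lemma preimage_cyl {k : ℕ} (a : Word k) {x : OdoSpace}
    (hx : ∃ n, (x n : ℕ) < 2 ^ (n + 1) - 1) :
    odometer x ∈ Cyl k a ↔ x ∈ Cyl k (predW a) := by
  constructor
  · intro hm n
    have hval : ∀ i : Fin k, (i : ℕ) < Nat.find hx → (a i : ℕ) = 0 := by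
      intro i hi
      rw [← hm i]
      exact odometer_val_lt x hx hi
    apply Fin.ext
    rcases lt_trichotomy (n : ℕ) (Nat.find hx) with hlt | heq | hgt
    · have hcond : ∀ i : Fin k, i ≤ n → (a i : ℕ) = 0 := fun i hi =>
        hval i (lt_of_le_of_lt (show (i : ℕ) ≤ (n : ℕ) from hi) hlt)
      simp only [predW, if_pos hcond]
      exact coord_max x hx hlt
    · have han : (a n : ℕ) = (x (n : ℕ) : ℕ) + 1 := by
        rw [← hm n]; exact odometer_val_eq x hx heq
      have hc1 : ¬ ∀ i : Fin k, i ≤ n → (a i : ℕ) = 0 := by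
        push_neg; exact ⟨n, le_refl _, by omega⟩
      have hc2 : ∀ i : Fin k, i < n → (a i : ℕ) = 0 := fun i hi =>
        hval i (lt_of_lt_of_le (show (i : ℕ) < (n : ℕ) from hi) (le_of_eq heq))
      simp only [predW, if_neg hc1, if_pos hc2]
      omega
    · have hxn : odometer x (n : ℕ) = x (n : ℕ) := odometer_val_gt x hx hgt
      have han : (a n : ℕ) = (x (n : ℕ) : ℕ) := by rw [← hm n, hxn]
      have hNf : (Nat.find hx) < k := lt_trans hgt n.isLt
      have haN : (a ⟨Nat.find hx, hNf⟩ : ℕ) = (x (Nat.find hx) : ℕ) + 1 := by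
        rw [← hm ⟨Nat.find hx, hNf⟩]
        exact odometer_val_eq x hx rfl
      have hc1 : ¬ ∀ i : Fin k, i ≤ n → (a i : ℕ) = 0 := by
        push_neg
        exact ⟨⟨Nat.find hx, hNf⟩, le_of_lt hgt, by omega⟩
      have hc2 : ¬ ∀ i : Fin k, i < n → (a i : ℕ) = 0 := by
        push_neg
        exact ⟨⟨Nat.find hx, hNf⟩, hgt, by omega⟩
      simp only [predW, if_neg hc1, if_neg hc2]
      omega
  · intro hc
    by_cases hz : ∀ i : Fin k, (a i : ℕ) = 0
    · have hxmax : ∀ i : Fin k, (x (i : ℕ) : ℕ) = 2 ^ ((i : ℕ) + 1) - 1 := by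
        intro i
        rw [hc i]
        simp only [predW, if_pos (fun j _ => hz j)]
      have hNk : k ≤ Nat.find hx := by
        by_contra hlt
        push_neg at hlt
        have h1 := Nat.find_spec hx
        have h2 : (x (Nat.find hx) : ℕ) = 2 ^ (Nat.find hx + 1) - 1 := hxmax ⟨Nat.find hx, hlt⟩
        omega
      intro n
      apply Fin.ext
      rw [odometer_val_lt x hx (lt_of_lt_of_le n.isLt hNk), hz n]
    · push_neg at hz
      have hQ : ∃ m, ∃ hm : m < k, (a ⟨m, hm⟩ : ℕ) ≠ 0 := by
        obtain ⟨i, hi⟩ := hz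
        exact ⟨(i : ℕ), i.isLt, hi⟩
      obtain ⟨hjk, haj⟩ := Nat.find_spec hQ
      have hjmin : ∀ i : Fin k, (i : ℕ) < Nat.find hQ → (a i : ℕ) = 0 := by
        intro i hi
        have h1 := Nat.find_min hQ hi
        push_neg at h1
        exact h1 i.isLt
      have hxlt : ∀ i : Fin k, (i : ℕ) < Nat.find hQ →
          (x (i : ℕ) : ℕ) = 2 ^ ((i : ℕ) + 1) - 1 := by
        intro i hi
        rw [hc i]
        have hcond : ∀ i' : Fin k, i' ≤ i → (a i' : ℕ) = 0 := fun i' hi' =>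
          hjmin i' (lt_of_le_of_lt (show (i' : ℕ) ≤ (i : ℕ) from hi') hi)
        simp only [predW, if_pos hcond]
      have hxj : (x (Nat.find hQ) : ℕ) = (a ⟨Nat.find hQ, hjk⟩ : ℕ) - 1 := by
        have h0 := hc ⟨Nat.find hQ, hjk⟩
        have hc1 : ¬ ∀ i' : Fin k, i' ≤ (⟨Nat.find hQ, hjk⟩ : Fin k) → (a i' : ℕ) = 0 := by
          push_neg; exact ⟨⟨Nat.find hQ, hjk⟩, le_refl _, haj⟩
        have hc2 : ∀ i' : Fin k, i' < (⟨Nat.find hQ, hjk⟩ : Fin k) → (a i' : ℕ) = 0 :=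
          fun i' hi' => hjmin i' hi'
        calc (x (Nat.find hQ) : ℕ) = (predW a ⟨Nat.find hQ, hjk⟩ : ℕ) := congrArg Fin.val h0
        _ = (a ⟨Nat.find hQ, hjk⟩ : ℕ) - 1 := by simp only [predW, if_neg hc1, if_pos hc2]
      have hNj : Nat.find hx = Nat.find hQ := by
        rw [Nat.find_eq_iff]
        constructor
        · have h1 : 1 ≤ (a ⟨Nat.find hQ, hjk⟩ : ℕ) := Nat.one_le_iff_ne_zero.mpr haj
          have h2 := (a ⟨Nat.find hQ, hjk⟩).isLt
          simp only [Fin.val_mk] at h2 ⊢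
          omega
        · intro m hm hcon
          have h3 : (x m : ℕ) = 2 ^ (m + 1) - 1 := hxlt ⟨m, lt_trans hm hjk⟩ hm
          omega
      intro n
      apply Fin.ext
      rcases lt_trichotomy (n : ℕ) (Nat.find hQ) with hlt | heq | hgt
      · rw [odometer_val_lt x hx (by omega), hjmin n hlt]
      · have hn : n = (⟨Nat.find hQ, hjk⟩ : Fin k) := Fin.ext heq
        subst hn
        rw [odometer_val_eq x hx (by omega)]
        have h1 : 1 ≤ (a ⟨Nat.find hQ, hjk⟩ : ℕ) := Nat.one_le_iff_ne_zero.mpr haj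
        simp only [Fin.val_mk]
        omega
      · rw [odometer_val_gt x hx (by omega), hc n]
        have hc1 : ¬ ∀ i' : Fin k, i' ≤ n → (a i' : ℕ) = 0 := by
          push_neg
          exact ⟨⟨Nat.find hQ, hjk⟩, le_of_lt hgt, haj⟩
        have hc2 : ¬ ∀ i' : Fin k, i' < n → (a i' : ℕ) = 0 := by
          push_neg
          exact ⟨⟨Nat.find hQ, hjk⟩, hgt, haj⟩
        simp only [predW, if_neg hc1, if_neg hc2]

/- ### Measurability -/

lemma meas_coord (m : ℕ) (S : Set (Fin (2 ^ (m + 1)))) :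
    MeasurableSet {x : OdoSpace | x m ∈ S} :=
  measurable_pi_apply m (S.to_countable.measurableSet)

/-- the set where some coordinate is non-maximal -/
def Eset : Set OdoSpace := {x | ∃ m, (x m : ℕ) < 2 ^ (m + 1) - 1}

lemma meas_Eset : MeasurableSet Eset := by
  have : Eset = ⋃ m, {x : OdoSpace | x m ∈ {v : Fin (2 ^ (m + 1)) | (v : ℕ) < 2 ^ (m + 1) - 1}} := by
    ext x; simp [Eset]
  rw [this]
  exact MeasurableSet.iUnion fun m => meas_coord m _

/-- all coordinates below `j` maximal, coordinate `j` non-maximal -/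
def Bset (j : ℕ) : Set OdoSpace :=
  {x | (∀ i, i < j → (x i : ℕ) = 2 ^ (i + 1) - 1) ∧ (x j : ℕ) < 2 ^ (j + 1) - 1}

lemma meas_Bset (j : ℕ) : MeasurableSet (Bset j) := by
  have : Bset j = (⋂ i, ⋂ _h : i < j,
      {x : OdoSpace | x i ∈ {v : Fin (2 ^ (i + 1)) | (v : ℕ) = 2 ^ (i + 1) - 1}}) ∩
      {x : OdoSpace | x j ∈ {v : Fin (2 ^ (j + 1)) | (v : ℕ) < 2 ^ (j + 1) - 1}} := by
    ext x; simp [Bset]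
  rw [this]
  exact (MeasurableSet.iInter fun i => MeasurableSet.iInter fun _ => meas_coord _ _).inter
    (meas_coord _ _)

lemma mem_Bset_find {x : OdoSpace} (hx : ∃ n, (x n : ℕ) < 2 ^ (n + 1) - 1) :
    x ∈ Bset (Nat.find hx) :=
  ⟨fun _i hi => coord_max x hx hi, Nat.find_spec hx⟩

lemma Bset_eq_find {x : OdoSpace} {j : ℕ} (hj : x ∈ Bset j)
    (hx : ∃ n, (x n : ℕ) < 2 ^ (n + 1) - 1) : Nat.find hx = j := by
  rcases lt_trichotomy (Nat.find hx) j with h | h | h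
  · have := hj.1 _ h
    have := Nat.find_spec hx
    omega
  · exact h
  · have := coord_max x hx h
    have := hj.2
    omega

lemma measurable_odometer : Measurable odometer := by
  rw [measurable_pi_iff]
  intro n
  apply measurable_to_countable'
  intro c
  have hset : ((fun x => odometer x n) ⁻¹' {c}) =
      (⋃ j, Bset j ∩
        (if n < j then (if (c : ℕ) = 0 then (univ : Set OdoSpace) else ∅)
         else if n = j then {x : OdoSpace | (x n : ℕ) + 1 = (c : ℕ)}
         else {x : OdoSpace | x n = c})) ∪ (Esetᶜ ∩ {x : OdoSpace | x n = c}) := by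
    ext x
    simp only [mem_preimage, mem_singleton_iff, mem_union, mem_iUnion, mem_inter_iff,
      mem_compl_iff]
    by_cases hx : ∃ m, (x m : ℕ) < 2 ^ (m + 1) - 1
    · constructor
      · intro hodo
        left
        refine ⟨Nat.find hx, mem_Bset_find hx, ?_⟩
        rcases lt_trichotomy n (Nat.find hx) with h | h | h
        · rw [if_pos h]
          have h0 : (odometer x n : ℕ) = 0 := odometer_val_lt x hx h
          rw [hodo] at h0
          rw [if_pos h0]
          trivial
        · rw [if_neg (by omega), if_pos h]
          have h0 : (odometer x n : ℕ) = (x n : ℕ) + 1 := odometer_val_eq x hx h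
          rw [hodo] at h0
          exact h0.symm
        · rw [if_neg (by omega), if_neg (by omega)]
          have h0 : odometer x n = x n := odometer_val_gt x hx h
          rw [hodo] at h0
          exact h0.symm
      · rintro (⟨j, hBj, hCj⟩ | ⟨hE, _⟩)
        · have hj : Nat.find hx = j := Bset_eq_find hBj hx
          rcases lt_trichotomy n j with h | h | h
          · rw [if_pos h] at hCj
            by_cases h0 : (c : ℕ) = 0
            · apply Fin.ext
              rw [odometer_val_lt x hx (by omega), h0]
            · rw [if_neg h0] at hCj
              exact absurd hCj (notMem_empty x)
          · rw [if_neg (by omega), if_pos h] at hCj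
            apply Fin.ext
            rw [odometer_val_eq x hx (by omega)]
            exact hCj
          · rw [if_neg (by omega), if_neg (by omega)] at hCj
            rw [odometer_val_gt x hx (by omega)]
            exact hCj
        · exact absurd (by exact hx) hE
    · rw [odometer_of_max x hx]
      constructor
      · intro hxc
        right
        exact ⟨hx, hxc⟩
      · rintro (⟨j, hBj, _⟩ | ⟨_, hxc⟩)
        · exact absurd ⟨j, hBj.2⟩ hx
        · exact hxc
  rw [hset]
  refine MeasurableSet.union (MeasurableSet.iUnion fun j => (meas_Bset j).inter ?_)
    (meas_Eset.compl.inter (meas_coord n {c}))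
  split_ifs
  · exact MeasurableSet.univ
  · exact MeasurableSet.empty
  · exact meas_coord n {v : Fin (2 ^ (n + 1)) | (v : ℕ) + 1 = (c : ℕ)}
  · exact meas_coord n {c}

/- ### The cylinder π-system generates the σ-algebra -/

lemma meas_Cyl {k : ℕ} {a : Word k} : MeasurableSet (Cyl k a) := by
  have : Cyl k a = ⋂ n : Fin k, {x : OdoSpace | x (n : ℕ) ∈ ({a n} : Set _)} := by
    ext x; simp [Cyl]
  rw [this]
  exact MeasurableSet.iInter fun n => meas_coord _ _

def CylSet : Set (Set OdoSpace) := {s | ∃ k, ∃ a : Word k, s = Cyl k a}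

lemma sigma_eq :
    (inferInstance : MeasurableSpace OdoSpace) = MeasurableSpace.generateFrom CylSet := by
  apply le_antisymm
  · refine iSup_le fun n => ?_
    have hm : @Measurable OdoSpace (Fin (2 ^ (n + 1))) (MeasurableSpace.generateFrom CylSet) _
        (fun x => x n) := by
      apply @measurable_to_countable' _ _ _ _ (MeasurableSpace.generateFrom CylSet)
      intro v
      have heq : (fun x : OdoSpace => x n) ⁻¹' {v} =
          ⋃ (a : Word (n + 1)) (_ : a ⟨n, Nat.lt_succ_self n⟩ = v), Cyl (n + 1) a := by
        ext x
        simp only [mem_preimage, mem_singleton_iff, mem_iUnion]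
        constructor
        · intro hv
          exact ⟨fun i => x (i : ℕ), hv, fun i => rfl⟩
        · rintro ⟨a, ha, hxa⟩
          rw [← ha]
          exact hxa ⟨n, Nat.lt_succ_self n⟩
      rw [heq]
      exact MeasurableSet.iUnion fun a => MeasurableSet.iUnion fun _ =>
        MeasurableSpace.measurableSet_generateFrom ⟨n + 1, a, rfl⟩
    exact hm.comap_le
  · refine MeasurableSpace.generateFrom_le fun s hs => ?_
    obtain ⟨k, a, rfl⟩ := hs
    exact meas_Cyl

lemma isPiSystem_CylSet : IsPiSystem CylSet := by
  rintro s ⟨k, a, rfl⟩ t ⟨k', a', rfl⟩ hst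
  obtain ⟨x, hxa, hxa'⟩ := hst
  refine ⟨max k k', fun n => x (n : ℕ), ?_⟩
  ext y
  constructor
  · rintro ⟨hya, hya'⟩ n
    rcases lt_max_iff.mp n.isLt with h | h
    · calc y (n : ℕ) = a ⟨(n : ℕ), h⟩ := hya ⟨(n : ℕ), h⟩
      _ = x (n : ℕ) := (hxa ⟨(n : ℕ), h⟩).symm
    · calc y (n : ℕ) = a' ⟨(n : ℕ), h⟩ := hya' ⟨(n : ℕ), h⟩
      _ = x (n : ℕ) := (hxa' ⟨(n : ℕ), h⟩).symm
  · intro hy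
    constructor
    · intro m
      have hm : (m : ℕ) < max k k' := lt_of_lt_of_le m.isLt (le_max_left _ _)
      calc y (m : ℕ) = x (m : ℕ) := hy ⟨(m : ℕ), hm⟩
      _ = a m := hxa m
    · intro m
      have hm : (m : ℕ) < max k k' := lt_of_lt_of_le m.isLt (le_max_right _ _)
      calc y (m : ℕ) = x (m : ℕ) := hy ⟨(m : ℕ), hm⟩
      _ = a' m := hxa' m

/- ### Measure computations -/

def maxW (k : ℕ) : Word k := fun n => ⟨2 ^ ((n : ℕ) + 1) - 1, by have := one_le_pow (n : ℕ); omega⟩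

variable {μ : Measure OdoSpace} [IsProbabilityMeasure μ]

omit [IsProbabilityMeasure μ] in
lemma null_compl
    (hμ : ∀ (k : ℕ) (a : Word k), μ (Cyl k a) = ∏ n : Fin k, ((2 : ℝ≥0∞) ^ ((n : ℕ) + 1))⁻¹) :
    μ Esetᶜ = 0 := by
  have hb : ∀ k : ℕ, μ Esetᶜ ≤ (2⁻¹ : ℝ≥0∞) ^ k := by
    intro k
    have hsub : Esetᶜ ⊆ Cyl k (maxW k) := by
      intro x hx n
      simp only [Eset, mem_compl_iff, mem_setOf_eq, not_exists, not_lt] at hx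
      have h1 := hx (n : ℕ)
      have h2 := (x (n : ℕ)).isLt
      exact Fin.ext (by simp only [maxW]; omega)
    calc μ Esetᶜ ≤ μ (Cyl k (maxW k)) := measure_mono hsub
    _ = ∏ n : Fin k, ((2 : ℝ≥0∞) ^ ((n : ℕ) + 1))⁻¹ := hμ k _
    _ ≤ ∏ _n : Fin k, (2⁻¹ : ℝ≥0∞) := by
        refine Finset.prod_le_prod' fun n _ => ?_
        rw [ENNReal.inv_le_inv]
        exact le_self_pow₀ one_le_two (Nat.succ_ne_zero _)
    _ = (2⁻¹ : ℝ≥0∞) ^ k := by simp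
  have h0 : Tendsto (fun k : ℕ => (2⁻¹ : ℝ≥0∞) ^ k) atTop (nhds 0) :=
    ENNReal.tendsto_pow_atTop_nhds_zero_of_lt_one (by norm_num)
  have := ge_of_tendsto' h0 hb
  simpa using this

omit [IsProbabilityMeasure μ] in
lemma preimage_cyl_ae
    (hμ : ∀ (k : ℕ) (a : Word k), μ (Cyl k a) = ∏ n : Fin k, ((2 : ℝ≥0∞) ^ ((n : ℕ) + 1))⁻¹)
    {k : ℕ} (a : Word k) : (odometer ⁻¹' Cyl k a : Set OdoSpace) =ᵐ[μ] Cyl k (predW a) := by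
  have hae : ∀ᵐ x ∂μ, x ∈ Eset := mem_ae_iff.mpr (null_compl hμ)
  rw [Filter.eventuallyEq_set]
  filter_upwards [hae] with x hx
  exact preimage_cyl a hx

lemma map_eq
    (hμ : ∀ (k : ℕ) (a : Word k), μ (Cyl k a) = ∏ n : Fin k, ((2 : ℝ≥0∞) ^ ((n : ℕ) + 1))⁻¹) :
    μ.map odometer = μ := by
  have : IsProbabilityMeasure (μ.map odometer) :=
    Measure.isProbabilityMeasure_map measurable_odometer.aemeasurable
  refine ext_of_generate_finite CylSet sigma_eq isPiSystem_CylSet ?_ (by simp)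
  rintro s ⟨k, a, rfl⟩
  rw [Measure.map_apply measurable_odometer meas_Cyl,
    measure_congr (preimage_cyl_ae hμ a), hμ k (predW a), hμ k a]

/- ### Counting: positional value of words, descent to the zero word -/

def Wt : ℕ → ℕ
  | 0 => 1
  | (i + 1) => 2 ^ (i + 1) * Wt i

lemma Wt_pos (i : ℕ) : 0 < Wt i := by
  induction i with
  | zero => simp [Wt]
  | succ i ih =>
    have : 0 < 2 ^ (i + 1) := by positivity
    simpa [Wt] using Nat.mul_pos this ih

lemma tele (j : ℕ) : ∑ i ∈ Finset.range j, (2 ^ (i + 1) - 1) * Wt i = Wt j - 1 := by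
  induction j with
  | zero => simp [Wt]
  | succ j ih =>
    rw [Finset.sum_range_succ, ih]
    have h1 := Wt_pos j
    have h2 : (2 ^ (j + 1) - 1) * Wt j = 2 ^ (j + 1) * Wt j - Wt j := by
      rw [Nat.sub_mul, one_mul]
    have h3 : Wt j ≤ 2 ^ (j + 1) * Wt j := Nat.le_mul_of_pos_left _ (by positivity)
    have h4 : Wt (j + 1) = 2 ^ (j + 1) * Wt j := rfl
    have h5 : 1 ≤ 2 ^ (j + 1) := one_le_pow j
    omega

def eW {k : ℕ} (a : Word k) : ℕ :=
  ∑ i ∈ Finset.range k, (if h : i < k then (a ⟨i, h⟩ : ℕ) else 0) * Wt i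

def zeroW (k : ℕ) : Word k := fun n => ⟨0, by have := one_le_pow ((n : ℕ)); omega⟩

lemma eW_pred_lt {k : ℕ} {a : Word k} (hz : ¬ ∀ i : Fin k, (a i : ℕ) = 0) :
    eW (predW a) < eW a := by
  push_neg at hz
  have hQ : ∃ m, ∃ hm : m < k, (a ⟨m, hm⟩ : ℕ) ≠ 0 := by
    obtain ⟨i, hi⟩ := hz
    exact ⟨(i : ℕ), i.isLt, hi⟩
  obtain ⟨hjk, haj⟩ := Nat.find_spec hQ
  have hjmin : ∀ i : Fin k, (i : ℕ) < Nat.find hQ → (a i : ℕ) = 0 := by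
    intro i hi
    have h1 := Nat.find_min hQ hi
    push_neg at h1
    exact h1 i.isLt
  have hpred_lt : ∀ i : Fin k, (i : ℕ) < Nat.find hQ →
      (predW a i : ℕ) = 2 ^ ((i : ℕ) + 1) - 1 := by
    intro i hi
    have hcond : ∀ i' : Fin k, i' ≤ i → (a i' : ℕ) = 0 := fun i' hi' =>
      hjmin i' (lt_of_le_of_lt (show (i' : ℕ) ≤ (i : ℕ) from hi') hi)
    simp only [predW, if_pos hcond]
  have hpred_j : (predW a ⟨Nat.find hQ, hjk⟩ : ℕ) = (a ⟨Nat.find hQ, hjk⟩ : ℕ) - 1 := by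
    have hc1 : ¬ ∀ i' : Fin k, i' ≤ (⟨Nat.find hQ, hjk⟩ : Fin k) → (a i' : ℕ) = 0 := by
      push_neg; exact ⟨⟨Nat.find hQ, hjk⟩, le_refl _, haj⟩
    have hc2 : ∀ i' : Fin k, i' < (⟨Nat.find hQ, hjk⟩ : Fin k) → (a i' : ℕ) = 0 :=
      fun i' hi' => hjmin i' hi'
    simp only [predW, if_neg hc1, if_pos hc2]
  have hpred_gt : ∀ i : Fin k, Nat.find hQ < (i : ℕ) → predW a i = a i := by
    intro i hi
    have hc1 : ¬ ∀ i' : Fin k, i' ≤ i → (a i' : ℕ) = 0 := by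
      push_neg
      exact ⟨⟨Nat.find hQ, hjk⟩, le_of_lt hi, haj⟩
    have hc2 : ¬ ∀ i' : Fin k, i' < i → (a i' : ℕ) = 0 := by
      push_neg
      exact ⟨⟨Nat.find hQ, hjk⟩, hi, haj⟩
    simp only [predW, if_neg hc1, if_neg hc2]
  have hsplit : ∀ b : Word k, eW b =
      ((∑ i ∈ Finset.range (Nat.find hQ), (if h : i < k then (b ⟨i, h⟩ : ℕ) else 0) * Wt i) +
        (if h : Nat.find hQ < k then (b ⟨Nat.find hQ, h⟩ : ℕ) else 0) * Wt (Nat.find hQ)) +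
      ∑ i ∈ Finset.Ico (Nat.find hQ + 1) k, (if h : i < k then (b ⟨i, h⟩ : ℕ) else 0) * Wt i := by
    intro b
    rw [eW, Finset.range_eq_Ico,
      ← Finset.sum_Ico_consecutive _ (Nat.zero_le (Nat.find hQ + 1)) hjk,
      ← Finset.range_eq_Ico, Finset.sum_range_succ]
  have htail : ∑ i ∈ Finset.Ico (Nat.find hQ + 1) k,
      (if h : i < k then ((predW a) ⟨i, h⟩ : ℕ) else 0) * Wt i =
      ∑ i ∈ Finset.Ico (Nat.find hQ + 1) k, (if h : i < k then (a ⟨i, h⟩ : ℕ) else 0) * Wt i := by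
    refine Finset.sum_congr rfl fun i hi => ?_
    obtain ⟨hi1, hi2⟩ := Finset.mem_Ico.mp hi
    rw [dif_pos hi2, dif_pos hi2, hpred_gt ⟨i, hi2⟩ (Nat.lt_of_succ_le hi1)]
  have hheadp : ∑ i ∈ Finset.range (Nat.find hQ),
      (if h : i < k then ((predW a) ⟨i, h⟩ : ℕ) else 0) * Wt i = Wt (Nat.find hQ) - 1 := by
    rw [← tele (Nat.find hQ)]
    refine Finset.sum_congr rfl fun i hi => ?_
    have hik : i < k := lt_trans (Finset.mem_range.mp hi) hjk
    rw [dif_pos hik, hpred_lt ⟨i, hik⟩ (Finset.mem_range.mp hi)]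
  have hheada : ∑ i ∈ Finset.range (Nat.find hQ),
      (if h : i < k then (a ⟨i, h⟩ : ℕ) else 0) * Wt i = 0 := by
    refine Finset.sum_eq_zero fun i hi => ?_
    have hik : i < k := lt_trans (Finset.mem_range.mp hi) hjk
    rw [dif_pos hik, hjmin ⟨i, hik⟩ (Finset.mem_range.mp hi), zero_mul]
  rw [hsplit (predW a), hsplit a, htail, hheadp, hheada, dif_pos hjk, dif_pos hjk, hpred_j]
  have h1 : 1 ≤ (a ⟨Nat.find hQ, hjk⟩ : ℕ) := Nat.one_le_iff_ne_zero.mpr haj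
  have h2 : 0 < Wt (Nat.find hQ) := Wt_pos _
  have h3 : ((a ⟨Nat.find hQ, hjk⟩ : ℕ) - 1) * Wt (Nat.find hQ) =
      (a ⟨Nat.find hQ, hjk⟩ : ℕ) * Wt (Nat.find hQ) - Wt (Nat.find hQ) := by
    rw [Nat.sub_mul, one_mul]
  have h4 : Wt (Nat.find hQ) ≤ (a ⟨Nat.find hQ, hjk⟩ : ℕ) * Wt (Nat.find hQ) :=
    Nat.le_mul_of_pos_left _ (by omega)
  omega

end OdoAux

open OdoAux

theorem stmt_8 (μ : Measure OdoSpace) [IsProbabilityMeasure μ]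
    (hμ : ∀ (k : ℕ) (a : (n : Fin k) → Fin (2 ^ ((n : ℕ) + 1))),
      μ {x : OdoSpace | ∀ n : Fin k, x (n : ℕ) = a n} =
        ∏ n : Fin k, ((2 : ℝ≥0∞) ^ ((n : ℕ) + 1))⁻¹) :
    Measure.QuasiMeasurePreserving odometer μ μ ∧ PreErgodic odometer μ := by
  have hμ' : ∀ (k : ℕ) (a : Word k), μ (Cyl k a) = ∏ n : Fin k, ((2 : ℝ≥0∞) ^ ((n : ℕ) + 1))⁻¹ :=
    hμ
  have hmap : μ.map odometer = μ := map_eq hμ'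
  constructor
  · exact ⟨measurable_odometer, by rw [hmap]⟩
  · constructor
    intro s hs hinv
    have hpres : ∀ B : Set OdoSpace, MeasurableSet B → μ (odometer ⁻¹' B) = μ B := by
      intro B hB
      conv_rhs => rw [← hmap]
      rw [Measure.map_apply measurable_odometer hB]
    have hstep : ∀ (k : ℕ) (a : Word k), μ (s ∩ Cyl k a) = μ (s ∩ Cyl k (predW a)) := by
      intro k a
      have h1 := hpres (s ∩ Cyl k a) (hs.inter meas_Cyl)
      rw [← h1, preimage_inter, hinv]
      exact measure_congr (EventuallyEq.rfl.inter (preimage_cyl_ae hμ' a))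
    have hconst : ∀ (k m : ℕ) (a : Word k), eW a = m →
        μ (s ∩ Cyl k a) = μ (s ∩ Cyl k (zeroW k)) := by
      intro k m
      induction m using Nat.strong_induction_on with
      | _ m IH =>
        intro a hm
        by_cases hz : ∀ i : Fin k, (a i : ℕ) = 0
        · rw [show a = zeroW k from funext fun i => Fin.ext (hz i)]
        · subst hm
          rw [hstep k a]
          exact IH (eW (predW a)) (eW_pred_lt hz) (predW a) rfl
    have hpart : ∀ k : ℕ, (∑ a : Word k, μ (s ∩ Cyl k a)) = μ s := by
      intro k
      have hUcyl : (⋃ a : Word k, Cyl k a) = univ :=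
        eq_univ_of_forall fun x => mem_iUnion.mpr ⟨fun n => x (n : ℕ), fun n => rfl⟩
      have hU : (⋃ a : Word k, s ∩ Cyl k a) = s := by
        rw [← Set.inter_iUnion, hUcyl, inter_univ]
      have hdisj : Pairwise (Function.onFun Disjoint fun a : Word k => s ∩ Cyl k a) := by
        intro a b hab
        refine Set.disjoint_left.mpr ?_
        rintro x ⟨_, hxa⟩ ⟨_, hxb⟩
        exact hab (funext fun n => by rw [← hxa n, ← hxb n])
      conv_rhs => rw [← hU]
      rw [measure_iUnion hdisj (fun a => hs.inter meas_Cyl), tsum_fintype]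
    have hmul : ∀ (k : ℕ) (a : Word k), μ (s ∩ Cyl k a) = μ s * μ (Cyl k a) := by
      intro k a
      have hall : (∑ b : Word k, μ (s ∩ Cyl k b)) =
          (Fintype.card (Word k) : ℝ≥0∞) * μ (s ∩ Cyl k (zeroW k)) := by
        rw [Finset.sum_congr rfl (fun b _ => hconst k (eW b) b rfl), Finset.sum_const,
          Finset.card_univ, nsmul_eq_mul]
      have hcard : (Fintype.card (Word k) : ℝ≥0∞) * μ (Cyl k a) = 1 := by
        rw [hμ' k a]
        have hcast : (Fintype.card (Word k) : ℝ≥0∞) =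
            ∏ n : Fin k, ((2 : ℝ≥0∞) ^ ((n : ℕ) + 1)) := by
          rw [Fintype.card_pi, Nat.cast_prod]
          refine Finset.prod_congr rfl fun n _ => ?_
          rw [Fintype.card_fin]
          push_cast
          ring
        rw [hcast, ← Finset.prod_mul_distrib]
        refine Finset.prod_eq_one fun n _ => ENNReal.mul_inv_cancel ?_ ?_
        · positivity
        · exact ENNReal.pow_ne_top ENNReal.ofNat_ne_top
      have hμs : μ s = (Fintype.card (Word k) : ℝ≥0∞) * μ (s ∩ Cyl k (zeroW k)) := by
        rw [← hall, hpart k]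
      calc μ (s ∩ Cyl k a) = μ (s ∩ Cyl k (zeroW k)) := hconst k (eW a) a rfl
      _ = μ (s ∩ Cyl k (zeroW k)) * ((Fintype.card (Word k) : ℝ≥0∞) * μ (Cyl k a)) := by
          rw [hcard, mul_one]
      _ = ((Fintype.card (Word k) : ℝ≥0∞) * μ (s ∩ Cyl k (zeroW k))) * μ (Cyl k a) := by
          ring
      _ = μ s * μ (Cyl k a) := by rw [← hμs]
    have hres : μ.restrict s = μ s • μ := by
      haveI : IsFiniteMeasure (μ s • μ) := by
        constructor
        rw [Measure.smul_apply, smul_eq_mul]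
        exact ENNReal.mul_lt_top (measure_lt_top μ s) (measure_lt_top μ univ)
      refine ext_of_generate_finite CylSet sigma_eq isPiSystem_CylSet ?_ ?_
      · rintro t ⟨k, a, rfl⟩
        rw [Measure.restrict_apply meas_Cyl, inter_comm, Measure.smul_apply, smul_eq_mul,
          hmul k a]
      · rw [Measure.restrict_apply MeasurableSet.univ, univ_inter, Measure.smul_apply,
          smul_eq_mul, measure_univ, mul_one]
    have h0 : μ s * μ sᶜ = 0 := by
      have h1 := congrArg (fun ν : Measure OdoSpace => ν sᶜ) hres
      simp only [Measure.restrict_apply hs.compl, Measure.smul_apply, smul_eq_mul] at h1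
      rw [← h1, compl_inter_self, measure_empty]
    rw [Filter.eventuallyConst_set']
    rcases mul_eq_zero.mp h0 with h | h
    · exact Or.inl (ae_eq_empty.mpr h)
    · exact Or.inr (ae_eq_univ.mpr h)
end

section
/- Let {F_t} be the flow built under the function f with base odometer T as above (f(x) = K_{2^{N(x)+1}+x_{N(x)+1}}, K_n = 1!2!⋯n!). Then for every δ > 0, lim_{s→∞} μ(Δ_{F,δ,s}(X)) = 0, where Δ_{F,δ,s}(X) = {x ∈ X : ∃ t with e^{s−δ} < |t| < e^{s+δ}, F_t(x,0) ∈ X × {0}}. -/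
open MeasureTheory Filter Set
open scoped ENNReal Classical

/-! ### Kfac lemmas -/

lemma Kfac_zero : Kfac 0 = 1 := rfl

lemma Kfac_succ (n : ℕ) : Kfac (n + 1) = Kfac n * Nat.factorial (n + 1) := by
  unfold Kfac
  rw [Finset.prod_Icc_succ_top (by omega)]

lemma one_le_Kfac (n : ℕ) : 1 ≤ Kfac n := by
  unfold Kfac
  exact Finset.one_le_prod' fun i _ => Nat.one_le_iff_ne_zero.2 (Nat.factorial_ne_zero i)

lemma Kfac_mono : Monotone Kfac := by
  apply monotone_nat_of_le_succ
  intro n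
  rw [Kfac_succ]
  exact Nat.le_mul_of_pos_right _ (Nat.factorial_pos _)

lemma self_le_Kfac (n : ℕ) : n ≤ Kfac n := by
  cases n with
  | zero => simp [Kfac_zero]
  | succ m =>
    calc m + 1 ≤ Nat.factorial (m + 1) := Nat.self_le_factorial _
    _ ≤ Kfac m * Nat.factorial (m + 1) := Nat.le_mul_of_pos_left _ (one_le_Kfac m)
    _ = Kfac (m + 1) := (Kfac_succ m).symm

lemma lt_of_Kfac_lt {a b : ℕ} (h : Kfac a < Kfac b) : a < b := by
  by_contra hab
  exact absurd (Kfac_mono (le_of_not_gt hab)) (not_le.2 h)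

/-! ### the mixed-radix weight -/

def Wt : ℕ → ℕ
  | 0 => 1
  | (j+1) => Wt j * 2 ^ (j + 1)

lemma one_le_Wt (j : ℕ) : 1 ≤ Wt j := by
  induction j with
  | zero => simp [Wt]
  | succ j ih =>
    show 1 ≤ Wt j * 2 ^ (j+1)
    exact Nat.one_le_iff_ne_zero.2 (Nat.mul_ne_zero (by omega) (by positivity))

lemma two_pow_le_factorial (n : ℕ) : 2 ^ n ≤ Nat.factorial (n + 1) := by
  induction n with
  | zero => simp [Nat.factorial]
  | succ n ih =>
    rw [pow_succ, Nat.factorial_succ]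
    calc 2 ^ n * 2 ≤ Nat.factorial (n + 1) * 2 := Nat.mul_le_mul_right _ ih
    _ = 2 * Nat.factorial (n + 1) := by ring
    _ ≤ (n + 2) * Nat.factorial (n + 1) := Nat.mul_le_mul_right _ (by omega)

/-- `Wt (p+1) = 2^{(p+1)(p+2)/2}` is (strictly) less than `(2^{p+2})!`. -/
lemma Wt_lt_factorial (p : ℕ) : Wt (p + 1) < Nat.factorial (2 ^ (p + 2)) := by
  -- first: Wt (p+1) ≤ 2 ^ (2^(p+2) - 2)
  have key : ∀ p : ℕ, Wt (p + 1) * 2 ^ 2 ≤ 2 ^ (2 ^ (p + 2)) := by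
    intro p
    induction p with
    | zero => norm_num [Wt]
    | succ p ih =>
      have h1 : Wt (p + 2) * 2 ^ 2 = (Wt (p + 1) * 2 ^ 2) * 2 ^ (p + 2) := by
        show Wt (p+1) * 2 ^ (p+2) * 2 ^ 2 = _
        ring
      rw [h1, pow_succ 2 (p+2), pow_mul 2 (2^(p+2)) 2] at *
      calc Wt (p + 1) * 2 ^ 2 * 2 ^ (p + 2) ≤ 2 ^ 2 ^ (p + 2) * 2 ^ (p + 2) :=
        Nat.mul_le_mul_right _ ih
      _ ≤ 2 ^ 2 ^ (p + 2) * 2 ^ 2 ^ (p + 2) := by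
          exact Nat.mul_le_mul_left _ (Nat.pow_le_pow_right (by norm_num) (by
            clear * -; induction p with
            | zero => norm_num
            | succ p ih => rw [pow_succ]; omega))
      _ = (2 ^ 2 ^ (p + 2)) ^ 2 := (sq _).symm
  have h2 := key p
  have h3 : 2 ^ (2 ^ (p + 2) - 1) ≤ Nat.factorial (2 ^ (p + 2)) := by
    have h4 : 2 ^ (p + 2) - 1 + 1 = 2 ^ (p + 2) := by
      have h5 : 1 ≤ 2 ^ (p + 2) := Nat.one_le_two_pow
      omega
    calc 2 ^ (2 ^ (p + 2) - 1) ≤ Nat.factorial (2 ^ (p + 2) - 1 + 1) := two_pow_le_factorial _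
    _ = Nat.factorial (2 ^ (p + 2)) := by rw [h4]
  have h5 : 4 ≤ 2 ^ (p + 2) := by
    have : 2 ^ 2 ≤ 2 ^ (p + 2) := Nat.pow_le_pow_right (by norm_num) (by omega)
    simpa using this
  have h6 : (2:ℕ) ^ (2 ^ (p + 2)) = 2 ^ (2 ^ (p+2) - 2) * 2 ^ 2 := by
    rw [← pow_add]; congr 1; omega
  rw [h6] at h2
  have h7 : Wt (p + 1) ≤ 2 ^ (2 ^ (p + 2) - 2) := Nat.le_of_mul_le_mul_right h2 (by norm_num)
  calc Wt (p+1) ≤ 2 ^ (2 ^ (p + 2) - 2) := h7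
    _ < 2 ^ (2 ^ (p+2) - 1) := Nat.pow_lt_pow_right (by norm_num) (by omega)
    _ ≤ Nat.factorial (2 ^ (p + 2)) := h3

/-! ### odometer structure -/

abbrev Good (x : OdoSpace) : Prop := ∃ n, (x n : ℕ) < 2 ^ (n + 1) - 1
abbrev Pos (x : OdoSpace) : Prop := ∃ n, 0 < (x n : ℕ)

noncomputable def maxPoint : OdoSpace := fun n => ⟨2 ^ (n + 1) - 1, by
  have : 1 ≤ 2 ^ (n + 1) := Nat.one_le_two_pow; omega⟩

noncomputable def zeroPoint : OdoSpace := fun n => ⟨0, Nat.pow_pos (by norm_num)⟩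

lemma not_good_eq_max {x : OdoSpace} (h : ¬ Good x) : x = maxPoint := by
  funext n
  apply Fin.ext
  have h1 : ¬ (x n : ℕ) < 2 ^ (n + 1) - 1 := fun hc => h ⟨n, hc⟩
  have h2 := (x n).isLt
  show (x n : ℕ) = 2 ^ (n + 1) - 1
  omega

lemma not_pos_eq_zero {x : OdoSpace} (h : ¬ Pos x) : x = zeroPoint := by
  funext n
  apply Fin.ext
  have h1 : ¬ 0 < (x n : ℕ) := fun hc => h ⟨n, hc⟩
  show (x n : ℕ) = 0
  omega

lemma Nfind_eq {x : OdoSpace} (h : Good x) : Nfind x = Nat.find h := by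
  unfold Nfind; rw [dif_pos h]

lemma Nfind_spec {x : OdoSpace} (h : Good x) : (x (Nfind x) : ℕ) < 2 ^ (Nfind x + 1) - 1 := by
  rw [Nfind_eq h]; exact Nat.find_spec h

lemma Nfind_min {x : OdoSpace} (h : Good x) {j : ℕ} (hj : j < Nfind x) :
    (x j : ℕ) = 2 ^ (j + 1) - 1 := by
  rw [Nfind_eq h] at hj
  have h1 := Nat.find_min h hj
  have h2 := (x j).isLt
  omega

lemma odometer_lt {x : OdoSpace} (h : Good x) {j : ℕ} (hj : j < Nfind x) :
    (odometer x j : ℕ) = 0 := by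
  unfold odometer
  rw [dif_pos h]
  rw [if_pos (by rwa [Nfind_eq h] at hj)]
  rfl

lemma odometer_at {x : OdoSpace} (h : Good x) :
    (odometer x (Nfind x) : ℕ) = (x (Nfind x) : ℕ) + 1 := by
  unfold odometer
  rw [dif_pos h]
  rw [if_neg (by rw [Nfind_eq h]; omega), dif_pos (Nfind_eq h)]

lemma odometer_gt {x : OdoSpace} (h : Good x) {j : ℕ} (hj : Nfind x < j) :
    odometer x j = x j := by
  unfold odometer
  rw [dif_pos h]
  rw [if_neg (by rw [Nfind_eq h] at hj; omega), dif_neg (by rw [Nfind_eq h] at hj; omega)]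

lemma odometer_not_good {x : OdoSpace} (h : ¬ Good x) : odometer x = x := by
  unfold odometer; rw [dif_neg h]

/-! inverse odometer -/

noncomputable def Mfind (x : OdoSpace) : ℕ :=
  if h : ∃ n, 0 < (x n : ℕ) then Nat.find h else 0

lemma Mfind_eq {x : OdoSpace} (h : Pos x) : Mfind x = Nat.find h := by
  unfold Mfind; rw [dif_pos h]

lemma Mfind_spec {x : OdoSpace} (h : Pos x) : 0 < (x (Mfind x) : ℕ) := by
  rw [Mfind_eq h]; exact Nat.find_spec h

lemma Mfind_min {x : OdoSpace} (h : Pos x) {j : ℕ} (hj : j < Mfind x) : (x j : ℕ) = 0 := by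
  rw [Mfind_eq h] at hj
  have := Nat.find_min h hj
  omega

lemma odometerInv_lt {x : OdoSpace} (h : Pos x) {j : ℕ} (hj : j < Mfind x) :
    (odometerInv x j : ℕ) = 2 ^ (j + 1) - 1 := by
  unfold odometerInv
  rw [dif_pos h]
  rw [if_pos (by rwa [Mfind_eq h] at hj)]

lemma odometerInv_at {x : OdoSpace} (h : Pos x) :
    (odometerInv x (Mfind x) : ℕ) = (x (Mfind x) : ℕ) - 1 := by
  unfold odometerInv
  rw [dif_pos h]
  rw [if_neg (by rw [Mfind_eq h]; omega), if_pos (Mfind_eq h)]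

lemma odometerInv_gt {x : OdoSpace} (h : Pos x) {j : ℕ} (hj : Mfind x < j) :
    odometerInv x j = x j := by
  unfold odometerInv
  rw [dif_pos h]
  rw [if_neg (by rw [Mfind_eq h] at hj; omega), if_neg (by rw [Mfind_eq h] at hj; omega)]

lemma odometerInv_not_pos {x : OdoSpace} (h : ¬ Pos x) : odometerInv x = x := by
  unfold odometerInv; rw [dif_neg h]

/-- `odometerInv` is a left inverse of `odometer` on good points. -/
lemma odometerInv_odometer {x : OdoSpace} (h : Good x) : odometerInv (odometer x) = x := by
  have hpos : Pos (odometer x) := ⟨Nfind x, by rw [odometer_at h]; omega⟩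
  have hM : Mfind (odometer x) = Nfind x := by
    rw [Mfind_eq hpos]
    rw [Nat.find_eq_iff]
    constructor
    · show 0 < (odometer x (Nfind x) : ℕ); rw [odometer_at h]; omega
    · intro j hj
      simp only [not_lt, Nat.le_zero]
      rw [odometer_lt h hj]
  funext j
  apply Fin.ext
  rcases lt_trichotomy j (Nfind x) with hj | hj | hj
  · rw [odometerInv_lt hpos (by rw [hM]; exact hj)]
    exact (Nfind_min h hj).symm
  · subst hj
    rw [← hM, odometerInv_at hpos, hM, odometer_at h]
    omega
  · rw [odometerInv_gt hpos (by rw [hM]; exact hj), odometer_gt h hj]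

/-- `odometer` is a left inverse of `odometerInv` on positive points. -/
lemma odometer_odometerInv {x : OdoSpace} (h : Pos x) : odometer (odometerInv x) = x := by
  have hMlt : (x (Mfind x) : ℕ) - 1 < 2 ^ (Mfind x + 1) - 1 := by
    have := (x (Mfind x)).isLt
    have := Mfind_spec h
    omega
  have hgood : Good (odometerInv x) := ⟨Mfind x, by rw [odometerInv_at h]; exact hMlt⟩
  have hN : Nfind (odometerInv x) = Mfind x := by
    rw [Nfind_eq hgood, Nat.find_eq_iff]
    constructor
    · show (odometerInv x (Mfind x) : ℕ) < 2 ^ (Mfind x + 1) - 1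
      rw [odometerInv_at h]; exact hMlt
    · intro j hj
      simp only [not_lt]
      rw [odometerInv_lt h hj]
  funext j
  apply Fin.ext
  rcases lt_trichotomy j (Mfind x) with hj | hj | hj
  · rw [odometer_lt hgood (by rw [hN]; exact hj)]
    exact (Mfind_min h hj).symm
  · subst hj
    rw [← hN, odometer_at hgood, hN, odometerInv_at h]
    have := Mfind_spec h
    omega
  · rw [odometer_gt hgood (by rw [hN]; exact hj), odometerInv_gt h hj]

/-! ### the mixed-radix counter -/

def Vc (p : ℕ) (x : OdoSpace) : ℕ := ∑ j ∈ Finset.range (p + 1), (x j : ℕ) * Wt j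

lemma sum_max_eq (N : ℕ) : ∑ j ∈ Finset.range N, (2 ^ (j + 1) - 1) * Wt j = Wt N - 1 := by
  induction N with
  | zero => simp [Wt]
  | succ N ih =>
    rw [Finset.sum_range_succ, ih]
    have h1 : 1 ≤ Wt N := one_le_Wt N
    have h2 : 1 ≤ 2 ^ (N + 1) := Nat.one_le_two_pow
    have h3 : Wt (N + 1) = Wt N * 2 ^ (N + 1) := rfl
    have h4 : (2 ^ (N + 1) - 1) * Wt N = Wt N * 2 ^ (N + 1) - Wt N := by
      rw [Nat.sub_mul, Nat.mul_comm]; omega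
    have h5 : Wt N ≤ Wt N * 2 ^ (N + 1) := Nat.le_mul_of_pos_right _ (by positivity)
    rw [h3, h4]
    omega

lemma Vc_lt (p : ℕ) (x : OdoSpace) : Vc p x < Wt (p + 1) := by
  have h : Vc p x ≤ ∑ j ∈ Finset.range (p + 1), (2 ^ (j + 1) - 1) * Wt j := by
    apply Finset.sum_le_sum
    intro j _
    have := (x j).isLt
    exact Nat.mul_le_mul_right _ (by omega)
  rw [sum_max_eq] at h
  have := one_le_Wt (p + 1)
  omega

abbrev Low (p : ℕ) (x : OdoSpace) : Prop := ∃ j ≤ p, (x j : ℕ) < 2 ^ (j + 1) - 1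

lemma Low.good {p : ℕ} {x : OdoSpace} (h : Low p x) : Good x := by
  obtain ⟨j, _, hj⟩ := h; exact ⟨j, hj⟩

lemma Nfind_le_of_low {p : ℕ} {x : OdoSpace} (h : Low p x) : Nfind x ≤ p := by
  obtain ⟨j, hjp, hj⟩ := h
  rw [Nfind_eq (Low.good ⟨j, hjp, hj⟩)]
  exact le_trans (Nat.find_le hj) hjp

lemma not_low {p : ℕ} {x : OdoSpace} (h : ¬ Low p x) {j : ℕ} (hj : j ≤ p) :
    (x j : ℕ) = 2 ^ (j + 1) - 1 := by
  have h1 : ¬ (x j : ℕ) < 2 ^ (j + 1) - 1 := fun hc => h ⟨j, hj, hc⟩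
  have := (x j).isLt
  omega

/-- applying the odometer at a low point increments the counter. -/
lemma Vc_odometer {p : ℕ} {x : OdoSpace} (h : Low p x) : Vc p (odometer x) = Vc p x + 1 := by
  have hg : Good x := Low.good h
  have hN : Nfind x ≤ p := Nfind_le_of_low h
  unfold Vc
  rw [Finset.range_eq_Ico, ← Finset.sum_Ico_consecutive _ (Nat.zero_le (Nfind x)) (by omega : Nfind x ≤ p + 1),
    ← Finset.sum_Ico_consecutive _ (Nat.zero_le (Nfind x)) (by omega : Nfind x ≤ p + 1),
    Finset.sum_eq_sum_Ico_succ_bot (by omega : Nfind x < p + 1),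
    Finset.sum_eq_sum_Ico_succ_bot (by omega : Nfind x < p + 1)]
  have e1 : ∑ j ∈ Finset.Ico 0 (Nfind x), (odometer x j : ℕ) * Wt j = 0 := by
    apply Finset.sum_eq_zero
    intro j hj
    simp only [Finset.mem_Ico] at hj
    rw [odometer_lt hg hj.2]
    ring
  have e2 : ∑ j ∈ Finset.Ico 0 (Nfind x), (x j : ℕ) * Wt j = Wt (Nfind x) - 1 := by
    rw [← sum_max_eq (Nfind x), Finset.range_eq_Ico]
    apply Finset.sum_congr rfl
    intro j hj
    simp only [Finset.mem_Ico] at hj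
    rw [Nfind_min hg hj.2]
  have e3 : ∑ j ∈ Finset.Ico (Nfind x + 1) (p + 1), (odometer x j : ℕ) * Wt j =
      ∑ j ∈ Finset.Ico (Nfind x + 1) (p + 1), (x j : ℕ) * Wt j := by
    apply Finset.sum_congr rfl
    intro j hj
    simp only [Finset.mem_Ico] at hj
    rw [odometer_gt hg (by omega)]
  rw [e1, e2, e3, odometer_at hg]
  have := one_le_Wt (Nfind x)
  ring_nf
  omega

lemma odometer_high {p : ℕ} {x : OdoSpace} (h : Low p x) {j : ℕ} (hj : p < j) :
    odometer x j = x j :=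
  odometer_gt (Low.good h) (lt_of_le_of_lt (Nfind_le_of_low h) hj)

/-- value of `ff` at a low point. -/
lemma mval_low {p : ℕ} {x : OdoSpace} (h : Low p x) :
    ff x = Kfac (2 ^ (Nfind x + 2) + (x (Nfind x + 1) : ℕ)) := rfl

/-! ### the forward main lemma -/

lemma fwd_main {p c k n : ℕ} {x : OdoSpace} (hc : c < 2 ^ (p + 2)) (hk : 1 ≤ k)
    (hn : n = 2 ^ (p + 2) + c)
    (hS1 : Kfac n ≤ ∑ i ∈ Finset.range k, ff (odometer^[i] x))
    (hS2 : ∑ i ∈ Finset.range k, ff (odometer^[i] x) < Kfac (n + 1)) :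
    (x (p + 1) : ℕ) = c ∨ ∃ i < k, odometer^[i] x = maxPoint := by
  have hterm_le : ∀ i < k, ff (odometer^[i] x) ≤ ∑ i ∈ Finset.range k, ff (odometer^[i] x) :=
    fun i hi => Finset.single_le_sum (f := fun j => ff (odometer^[j] x)) (fun j _ => Nat.zero_le _) (Finset.mem_range.2 hi)
  by_cases hlow : ∀ i < k, Low p (odometer^[i] x)
  · left
    have key : ∀ i < k, (odometer^[i] x (p + 1) : ℕ) = (x (p + 1) : ℕ) ∧
        Vc p (odometer^[i] x) = Vc p x + i := by
      intro i hi
      induction i with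
      | zero => simp
      | succ i ih =>
        have hik : i < k := by omega
        obtain ⟨ih1, ih2⟩ := ih hik
        have hl := hlow i hik
        refine ⟨?_, ?_⟩
        · rw [Function.iterate_succ_apply', odometer_high hl (by omega)]
          exact ih1
        · rw [Function.iterate_succ_apply', Vc_odometer hl, ih2]
          omega
    have hkle : k ≤ Wt (p + 1) := by
      have h1 := (key (k - 1) (by omega)).2
      have h2 := Vc_lt p (odometer^[k-1] x)
      omega
    by_contra hcc
    have hterm : ∀ i < k, ff (odometer^[i] x) ≤ Kfac (n - 1) := by
      intro i hi
      have hl := hlow i hi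
      have hNle : Nfind (odometer^[i] x) ≤ p := Nfind_le_of_low hl
      have hffS := hterm_le i hi
      have hmle : 2 ^ (Nfind (odometer^[i] x) + 2) + (odometer^[i] x (Nfind (odometer^[i] x) + 1) : ℕ) ≤ n := by
        by_contra hgt
        have hb : Kfac (n + 1) ≤ ff (odometer^[i] x) := by
          rw [mval_low hl]
          exact Kfac_mono (by omega)
        omega
      rw [mval_low hl]
      apply Kfac_mono
      rcases Nat.lt_or_ge (Nfind (odometer^[i] x)) p with hNp | hNp
      · have hcoord := (odometer^[i] x (Nfind (odometer^[i] x) + 1)).isLt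
        have h1 : (2:ℕ) ^ (Nfind (odometer^[i] x) + 1 + 1) = 2 ^ (Nfind (odometer^[i] x) + 2) := by ring
        have h2 : (2:ℕ) ^ (Nfind (odometer^[i] x) + 3) ≤ 2 ^ (p + 2) :=
          Nat.pow_le_pow_right (by norm_num) (by omega)
        have h4 : (2:ℕ) ^ (Nfind (odometer^[i] x) + 3) = 2 * 2 ^ (Nfind (odometer^[i] x) + 2) := by ring
        omega
      · have hNeq : Nfind (odometer^[i] x) = p := le_antisymm hNle hNp
        have hcoordeq := (key i hi).1
        rw [hNeq]
        have hne : 2 ^ (p + 2) + (odometer^[i] x (p + 1) : ℕ) ≠ n := by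
          rw [hcoordeq, hn]
          intro hcon
          exact hcc (by omega)
        rw [hNeq] at hmle
        omega
    have hsum : ∑ i ∈ Finset.range k, ff (odometer^[i] x) ≤ k * Kfac (n - 1) := by
      calc ∑ i ∈ Finset.range k, ff (odometer^[i] x)
          ≤ ∑ _i ∈ Finset.range k, Kfac (n - 1) :=
            Finset.sum_le_sum fun i hi => hterm i (Finset.mem_range.1 hi)
      _ = k * Kfac (n - 1) := by rw [Finset.sum_const, Finset.card_range, smul_eq_mul]
    have hlt : k * Kfac (n - 1) < Kfac n := by
      have hne : n - 1 + 1 = n := by have : 1 ≤ (2:ℕ)^(p+2) := Nat.one_le_two_pow; omega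
      have h1 : Kfac n = Kfac (n - 1) * Nat.factorial n := by
        conv_lhs => rw [← hne, Kfac_succ, hne]
      have h2 : k < Nat.factorial n := by
        calc k ≤ Wt (p + 1) := hkle
        _ < Nat.factorial (2 ^ (p + 2)) := Wt_lt_factorial p
        _ ≤ Nat.factorial n := Nat.factorial_le (by omega)
      calc k * Kfac (n - 1)
          < Nat.factorial n * Kfac (n - 1) := by
            apply mul_lt_mul_of_pos_right h2
            exact Nat.lt_of_lt_of_le Nat.zero_lt_one (one_le_Kfac _)
      _ = Kfac n := by rw [h1]; ring
    omega
  · push_neg at hlow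
    obtain ⟨i, hik, hhigh⟩ := hlow
    by_cases hg : Good (odometer^[i] x)
    · exfalso
      have hN : p + 1 ≤ Nfind (odometer^[i] x) := by
        rw [Nfind_eq hg]
        by_contra hlt
        push_neg at hlt
        have h1 := Nat.find_spec hg
        have h2 : (odometer^[i] x (Nat.find hg) : ℕ) = 2 ^ (Nat.find hg + 1) - 1 :=
          not_low (p := p) (x := odometer^[i] x)
            (fun ⟨j, hj, hc⟩ => absurd hc (not_lt.2 (hhigh j hj))) (by omega)
        omega
      have hbig : Kfac (n + 1) ≤ ff (odometer^[i] x) := by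
        apply Kfac_mono
        have h1 : (2:ℕ) ^ (p + 3) ≤ 2 ^ (Nfind (odometer^[i] x) + 2) :=
          Nat.pow_le_pow_right (by norm_num) (by omega)
        have h3 : (2:ℕ) ^ (p + 3) = 2 ^ (p+2) * 2 := by ring
        omega
      have h4 := hterm_le i hik
      omega
    · exact Or.inr ⟨i, hik, not_good_eq_max hg⟩

/-! ### the backward main lemma -/

abbrev InvLow (p : ℕ) (x : OdoSpace) : Prop := ∃ j ≤ p, 0 < (x j : ℕ)

lemma InvLow.pos {p : ℕ} {x : OdoSpace} (h : InvLow p x) : Pos x := by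
  obtain ⟨j, _, hj⟩ := h; exact ⟨j, hj⟩

lemma Mfind_le_of_invLow {p : ℕ} {x : OdoSpace} (h : InvLow p x) : Mfind x ≤ p := by
  obtain ⟨j, hjp, hj⟩ := h
  rw [Mfind_eq (InvLow.pos ⟨j, hjp, hj⟩)]
  exact le_trans (Nat.find_le hj) hjp

lemma not_invLow {p : ℕ} {x : OdoSpace} (h : ¬ InvLow p x) {j : ℕ} (hj : j ≤ p) :
    (x j : ℕ) = 0 := by
  have h1 : ¬ 0 < (x j : ℕ) := fun hc => h ⟨j, hj, hc⟩
  omega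

lemma one_le_Vc_of_invLow {p : ℕ} {x : OdoSpace} (h : InvLow p x) : 1 ≤ Vc p x := by
  obtain ⟨j, hjp, hj⟩ := h
  calc 1 ≤ (x j : ℕ) * Wt j := by
        have := one_le_Wt j
        exact Nat.one_le_iff_ne_zero.2 (Nat.mul_ne_zero (by omega) (by omega))
  _ ≤ Vc p x := Finset.single_le_sum (f := fun j => (x j : ℕ) * Wt j)
      (fun _ _ => Nat.zero_le _) (Finset.mem_range.2 (by omega))

lemma good_odometerInv {x : OdoSpace} (h : Pos x) : Good (odometerInv x) := by
  refine ⟨Mfind x, ?_⟩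
  rw [odometerInv_at h]
  have := (x (Mfind x)).isLt
  have := Mfind_spec h
  omega

lemma Nfind_odometerInv {x : OdoSpace} (h : Pos x) : Nfind (odometerInv x) = Mfind x := by
  have hgood := good_odometerInv h
  rw [Nfind_eq hgood, Nat.find_eq_iff]
  constructor
  · show (odometerInv x (Mfind x) : ℕ) < 2 ^ (Mfind x + 1) - 1
    rw [odometerInv_at h]
    have := (x (Mfind x)).isLt
    have := Mfind_spec h
    omega
  · intro j hj
    simp only [not_lt]
    rw [odometerInv_lt h hj]

/-- applying the inverse odometer at an inv-low point decrements the counter. -/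
lemma Vc_odometerInv {p : ℕ} {x : OdoSpace} (h : InvLow p x) :
    Vc p (odometerInv x) + 1 = Vc p x := by
  have hg : Pos x := InvLow.pos h
  have hM : Mfind x ≤ p := Mfind_le_of_invLow h
  unfold Vc
  rw [Finset.range_eq_Ico,
    ← Finset.sum_Ico_consecutive _ (Nat.zero_le (Mfind x)) (by omega : Mfind x ≤ p + 1),
    ← Finset.sum_Ico_consecutive _ (Nat.zero_le (Mfind x)) (by omega : Mfind x ≤ p + 1),
    Finset.sum_eq_sum_Ico_succ_bot (by omega : Mfind x < p + 1),
    Finset.sum_eq_sum_Ico_succ_bot (by omega : Mfind x < p + 1)]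
  have e1 : ∑ j ∈ Finset.Ico 0 (Mfind x), (odometerInv x j : ℕ) * Wt j = Wt (Mfind x) - 1 := by
    rw [← sum_max_eq (Mfind x), Finset.range_eq_Ico]
    apply Finset.sum_congr rfl
    intro j hj
    simp only [Finset.mem_Ico] at hj
    rw [odometerInv_lt hg hj.2]
  have e2 : ∑ j ∈ Finset.Ico 0 (Mfind x), (x j : ℕ) * Wt j = 0 := by
    apply Finset.sum_eq_zero
    intro j hj
    simp only [Finset.mem_Ico] at hj
    rw [Mfind_min hg hj.2]
    ring
  have e3 : ∑ j ∈ Finset.Ico (Mfind x + 1) (p + 1), (odometerInv x j : ℕ) * Wt j =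
      ∑ j ∈ Finset.Ico (Mfind x + 1) (p + 1), (x j : ℕ) * Wt j := by
    apply Finset.sum_congr rfl
    intro j hj
    simp only [Finset.mem_Ico] at hj
    rw [odometerInv_gt hg (by omega)]
  rw [e1, e2, e3, odometerInv_at hg]
  have h1 := one_le_Wt (Mfind x)
  have h2 := Mfind_spec hg
  have h3 : ((x (Mfind x) : ℕ) - 1) * Wt (Mfind x) = (x (Mfind x) : ℕ) * Wt (Mfind x) - Wt (Mfind x) := by
    rw [Nat.sub_mul]; omega
  have h4 : Wt (Mfind x) ≤ (x (Mfind x) : ℕ) * Wt (Mfind x) := Nat.le_mul_of_pos_left _ (by omega)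
  omega

lemma odometerInv_high {p : ℕ} {x : OdoSpace} (h : InvLow p x) {j : ℕ} (hj : p < j) :
    odometerInv x j = x j :=
  odometerInv_gt (InvLow.pos h) (lt_of_le_of_lt (Mfind_le_of_invLow h) hj)

lemma bwd_main {p c k n : ℕ} {x : OdoSpace} (hc : c < 2 ^ (p + 2)) (hk : 1 ≤ k)
    (hn : n = 2 ^ (p + 2) + c)
    (hS1 : Kfac n ≤ ∑ i ∈ Finset.range k, ff (odometerInv^[i + 1] x))
    (hS2 : ∑ i ∈ Finset.range k, ff (odometerInv^[i + 1] x) < Kfac (n + 1)) :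
    (x (p + 1) : ℕ) = c ∨ ∃ i < k, odometerInv^[i] x = zeroPoint := by
  have hterm_le : ∀ i < k, ff (odometerInv^[i + 1] x) ≤ ∑ i ∈ Finset.range k, ff (odometerInv^[i + 1] x) :=
    fun i hi => Finset.single_le_sum (f := fun j => ff (odometerInv^[j + 1] x))
      (fun j _ => Nat.zero_le _) (Finset.mem_range.2 hi)
  by_cases hlow : ∀ i < k, InvLow p (odometerInv^[i] x)
  · left
    have key : ∀ i ≤ k, (odometerInv^[i] x (p + 1) : ℕ) = (x (p + 1) : ℕ) ∧
        Vc p (odometerInv^[i] x) + i = Vc p x := by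
      intro i hi
      induction i with
      | zero => simp
      | succ i ih =>
        have hik : i < k := by omega
        obtain ⟨ih1, ih2⟩ := ih (by omega)
        have hl := hlow i hik
        refine ⟨?_, ?_⟩
        · rw [Function.iterate_succ_apply', odometerInv_high hl (by omega)]
          exact ih1
        · rw [Function.iterate_succ_apply']
          have := Vc_odometerInv hl
          omega
    by_contra hcc
    have hterm : ∀ i < k, ff (odometerInv^[i + 1] x) ≤ Kfac (n - 1) := by
      intro i hi
      have hl := hlow i hi
      have hpos : Pos (odometerInv^[i] x) := InvLow.pos hl
      have hMle : Mfind (odometerInv^[i] x) ≤ p := Mfind_le_of_invLow hl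
      have hstep : odometerInv^[i + 1] x = odometerInv (odometerInv^[i] x) :=
        Function.iterate_succ_apply' _ _ _
      have hNeq : Nfind (odometerInv^[i + 1] x) = Mfind (odometerInv^[i] x) := by
        rw [hstep]; exact Nfind_odometerInv hpos
      have hffS := hterm_le i hi
      have hmle : 2 ^ (Nfind (odometerInv^[i+1] x) + 2) +
          (odometerInv^[i+1] x (Nfind (odometerInv^[i+1] x) + 1) : ℕ) ≤ n := by
        by_contra hgt
        have hb : Kfac (n + 1) ≤ ff (odometerInv^[i+1] x) := by
          show Kfac (n+1) ≤ Kfac _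
          exact Kfac_mono (by omega)
        omega
      show Kfac _ ≤ Kfac (n - 1)
      apply Kfac_mono
      rcases Nat.lt_or_ge (Nfind (odometerInv^[i+1] x)) p with hNp | hNp
      · have hcoord := (odometerInv^[i+1] x (Nfind (odometerInv^[i+1] x) + 1)).isLt
        have h1 : (2:ℕ) ^ (Nfind (odometerInv^[i+1] x) + 1 + 1) = 2 ^ (Nfind (odometerInv^[i+1] x) + 2) := by ring
        have h2 : (2:ℕ) ^ (Nfind (odometerInv^[i+1] x) + 3) ≤ 2 ^ (p + 2) :=
          Nat.pow_le_pow_right (by norm_num) (by omega)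
        have h4 : (2:ℕ) ^ (Nfind (odometerInv^[i+1] x) + 3) = 2 * 2 ^ (Nfind (odometerInv^[i+1] x) + 2) := by ring
        omega
      · have hNeq2 : Nfind (odometerInv^[i+1] x) = p := by omega
        have hcoordeq := (key (i+1) (by omega)).1
        rw [hNeq2]
        have hne : 2 ^ (p + 2) + (odometerInv^[i+1] x (p + 1) : ℕ) ≠ n := by
          rw [hcoordeq, hn]
          intro hcon
          exact hcc (by omega)
        rw [hNeq2] at hmle
        omega
    -- k ≤ Vc p x < Wt (p+1)
    have hkle : k ≤ Wt (p + 1) := by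
      have h1 := (key (k - 1) (by omega)).2
      have h2 := one_le_Vc_of_invLow (hlow (k-1) (by omega))
      have h3 := Vc_lt p x
      omega
    have hsum : ∑ i ∈ Finset.range k, ff (odometerInv^[i+1] x) ≤ k * Kfac (n - 1) := by
      calc ∑ i ∈ Finset.range k, ff (odometerInv^[i+1] x)
          ≤ ∑ _i ∈ Finset.range k, Kfac (n - 1) :=
            Finset.sum_le_sum fun i hi => hterm i (Finset.mem_range.1 hi)
      _ = k * Kfac (n - 1) := by rw [Finset.sum_const, Finset.card_range, smul_eq_mul]
    have hlt : k * Kfac (n - 1) < Kfac n := by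
      have hne : n - 1 + 1 = n := by have : 1 ≤ (2:ℕ)^(p+2) := Nat.one_le_two_pow; omega
      have h1 : Kfac n = Kfac (n - 1) * Nat.factorial n := by
        conv_lhs => rw [← hne, Kfac_succ, hne]
      have h2 : k < Nat.factorial n := by
        calc k ≤ Wt (p + 1) := hkle
        _ < Nat.factorial (2 ^ (p + 2)) := Wt_lt_factorial p
        _ ≤ Nat.factorial n := Nat.factorial_le (by omega)
      calc k * Kfac (n - 1)
          < Nat.factorial n * Kfac (n - 1) := by
            apply mul_lt_mul_of_pos_right h2
            exact Nat.lt_of_lt_of_le Nat.zero_lt_one (one_le_Kfac _)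
      _ = Kfac n := by rw [h1]; ring
    omega
  · push_neg at hlow
    obtain ⟨i, hik, hhigh⟩ := hlow
    by_cases hg : Pos (odometerInv^[i] x)
    · exfalso
      have hstep : odometerInv^[i + 1] x = odometerInv (odometerInv^[i] x) :=
        Function.iterate_succ_apply' _ _ _
      have hM : p + 1 ≤ Mfind (odometerInv^[i] x) := by
        rw [Mfind_eq hg]
        by_contra hlt
        push_neg at hlt
        have h1 := Nat.find_spec hg
        have h2 : (odometerInv^[i] x (Nat.find hg) : ℕ) = 0 := not_invLow (p := p) (x := odometerInv^[i] x)
          (fun ⟨j, hj, hc⟩ => absurd hc (not_lt.2 (hhigh j hj))) (by omega)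
        omega
      have hN : p + 1 ≤ Nfind (odometerInv^[i+1] x) := by
        rw [hstep, Nfind_odometerInv hg]; exact hM
      have hbig : Kfac (n + 1) ≤ ff (odometerInv^[i+1] x) := by
        show Kfac (n+1) ≤ Kfac _
        apply Kfac_mono
        have h1 : (2:ℕ) ^ (p + 3) ≤ 2 ^ (Nfind (odometerInv^[i+1] x) + 2) :=
          Nat.pow_le_pow_right (by norm_num) (by omega)
        have h3 : (2:ℕ) ^ (p + 3) = 2 ^ (p+2) * 2 := by ring
        omega
      have h4 := hterm_le i hik
      omega
    · exact Or.inr ⟨i, hik, not_pos_eq_zero hg⟩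

/-! ### exceptional orbits -/

lemma mem_inv_orbit_of_iterate_max {x : OdoSpace} {i : ℕ} (h : odometer^[i] x = maxPoint) :
    ∃ j, x = odometerInv^[j] maxPoint := by
  induction i generalizing x with
  | zero => exact ⟨0, by simpa using h⟩
  | succ i ih =>
    rw [Function.iterate_succ_apply] at h
    obtain ⟨j, hj⟩ := ih h
    by_cases hg : Good x
    · refine ⟨j + 1, ?_⟩
      rw [Function.iterate_succ_apply', ← hj, odometerInv_odometer hg]
    · exact ⟨0, not_good_eq_max hg⟩

lemma mem_orbit_of_iterate_zero {x : OdoSpace} {i : ℕ} (h : odometerInv^[i] x = zeroPoint) :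
    ∃ j, x = odometer^[j] zeroPoint := by
  induction i generalizing x with
  | zero => exact ⟨0, by simpa using h⟩
  | succ i ih =>
    rw [Function.iterate_succ_apply] at h
    obtain ⟨j, hj⟩ := ih h
    by_cases hg : Pos x
    · refine ⟨j + 1, ?_⟩
      rw [Function.iterate_succ_apply', ← hj, odometer_odometerInv hg]
    · exact ⟨0, not_pos_eq_zero hg⟩

/-! ### measure lemmas -/

section Measure

variable {μ : Measure OdoSpace}

lemma singleton_null
    (hμ : ∀ (k : ℕ) (a : (n : Fin k) → Fin (2 ^ ((n : ℕ) + 1))),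
      μ {x : OdoSpace | ∀ n : Fin k, x (n : ℕ) = a n} =
        ∏ n : Fin k, ((2 : ℝ≥0∞) ^ ((n : ℕ) + 1))⁻¹)
    (y : OdoSpace) : μ {y} = 0 := by
  have key : ∀ k : ℕ, μ {y} ≤ 2⁻¹ ^ k := by
    intro k
    have hsub : {y} ⊆ {x : OdoSpace | ∀ n : Fin k, x (n : ℕ) = y (n : ℕ)} := by
      intro x hx
      rw [Set.mem_singleton_iff] at hx
      subst hx
      exact fun n => rfl
    calc μ {y} ≤ μ {x : OdoSpace | ∀ n : Fin k, x (n : ℕ) = y (n : ℕ)} := measure_mono hsub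
    _ = ∏ n : Fin k, ((2 : ℝ≥0∞) ^ ((n : ℕ) + 1))⁻¹ := hμ k (fun n => y (n : ℕ))
    _ ≤ ∏ _n : Fin k, (2 : ℝ≥0∞)⁻¹ := by
        apply Finset.prod_le_prod'
        intro n _
        apply ENNReal.inv_le_inv.2
        calc (2:ℝ≥0∞) = 2 ^ 1 := (pow_one 2).symm
        _ ≤ 2 ^ ((n : ℕ) + 1) := by
            apply pow_le_pow_right₀ (by norm_num) (by omega)
    _ = 2⁻¹ ^ k := by rw [Finset.prod_const, Finset.card_univ, Fintype.card_fin]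
  by_contra hne
  obtain ⟨k, hk⟩ := ENNReal.exists_inv_two_pow_lt hne
  exact absurd (key k) (not_le.2 hk)

lemma orbit_null
    (hμ : ∀ (k : ℕ) (a : (n : Fin k) → Fin (2 ^ ((n : ℕ) + 1))),
      μ {x : OdoSpace | ∀ n : Fin k, x (n : ℕ) = a n} =
        ∏ n : Fin k, ((2 : ℝ≥0∞) ^ ((n : ℕ) + 1))⁻¹)
    (g : OdoSpace → OdoSpace) (z : OdoSpace) :
    μ {x : OdoSpace | ∃ j : ℕ, x = g^[j] z} = 0 := by
  have hsub : {x : OdoSpace | ∃ j : ℕ, x = g^[j] z} ⊆ ⋃ j : ℕ, {g^[j] z} := by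
    intro x ⟨j, hj⟩
    exact Set.mem_iUnion.2 ⟨j, hj⟩
  refine le_antisymm ?_ zero_le
  calc μ {x : OdoSpace | ∃ j : ℕ, x = g^[j] z} ≤ μ (⋃ j : ℕ, {g^[j] z}) := measure_mono hsub
  _ = 0 := measure_iUnion_null fun j => singleton_null hμ _
  _ ≤ 0 := le_refl 0

/-- the measure of a one-coordinate cylinder. -/
lemma cylinder_bound
    (hμ : ∀ (k : ℕ) (a : (n : Fin k) → Fin (2 ^ ((n : ℕ) + 1))),
      μ {x : OdoSpace | ∀ n : Fin k, x (n : ℕ) = a n} =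
        ∏ n : Fin k, ((2 : ℝ≥0∞) ^ ((n : ℕ) + 1))⁻¹)
    (p c : ℕ) :
    μ {x : OdoSpace | (x (p + 1) : ℕ) = c} ≤ ((2 : ℝ≥0∞) ^ (p + 2))⁻¹ := by
  classical
  set ι := (j : Fin (p + 2)) → Fin (2 ^ ((j : ℕ) + 1)) with hι
  -- the cover
  have hsub : {x : OdoSpace | (x (p + 1) : ℕ) = c} ⊆
      ⋃ a : ι, if (a ⟨p+1, by omega⟩ : ℕ) = c
        then {x : OdoSpace | ∀ j : Fin (p + 2), x (j : ℕ) = a j} else (∅ : Set OdoSpace) := by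
    intro x hx
    apply Set.mem_iUnion.2
    refine ⟨fun j => x (j : ℕ), ?_⟩
    show x ∈ (if ((x (p + 1) : ℕ)) = c
      then {x' : OdoSpace | ∀ j : Fin (p + 2), x' (j : ℕ) = x (j : ℕ)} else (∅ : Set OdoSpace))
    rw [if_pos (show (x (p + 1) : ℕ) = c from hx)]
    exact fun j => rfl
  have hcover : μ {x : OdoSpace | (x (p + 1) : ℕ) = c} ≤
      ∑' a : ι, μ (if (a ⟨p+1, by omega⟩ : ℕ) = c
        then {x : OdoSpace | ∀ j : Fin (p + 2), x (j : ℕ) = a j} else (∅ : Set OdoSpace)) :=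
    (measure_mono hsub).trans (measure_iUnion_le _)
  rw [tsum_fintype] at hcover
  refine hcover.trans ?_
  -- pointwise value
  have hval : ∀ a : ι,
      μ (if (a ⟨p+1, by omega⟩ : ℕ) = c
        then {x : OdoSpace | ∀ j : Fin (p + 2), x (j : ℕ) = a j} else (∅ : Set OdoSpace)) =
      ∏ j : Fin (p + 2), (if (j : ℕ) = p + 1
        then (if (a j : ℕ) = c then ((2:ℝ≥0∞) ^ ((j:ℕ) + 1))⁻¹ else 0)
        else ((2:ℝ≥0∞) ^ ((j:ℕ) + 1))⁻¹) := by
    intro a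
    by_cases hac : (a ⟨p+1, by omega⟩ : ℕ) = c
    · rw [if_pos hac, hμ (p+2) a]
      apply Finset.prod_congr rfl
      intro j _
      by_cases hj : (j : ℕ) = p + 1
      · have hjeq : j = ⟨p+1, by omega⟩ := Fin.ext hj
        rw [if_pos hj, if_pos (by rw [hjeq]; exact hac)]
      · rw [if_neg hj]
    · rw [if_neg hac, measure_empty]
      have hzero : (if ((⟨p+1, by omega⟩ : Fin (p+2)) : ℕ) = p + 1
          then (if (a ⟨p+1, by omega⟩ : ℕ) = c then ((2:ℝ≥0∞) ^ ((p+1) + 1))⁻¹ else 0)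
          else ((2:ℝ≥0∞) ^ ((p+1) + 1))⁻¹) = 0 := by
        rw [if_pos rfl, if_neg hac]
      refine (Finset.prod_eq_zero (Finset.mem_univ (⟨p+1, by omega⟩ : Fin (p+2))) ?_).symm
      exact hzero
  calc (∑ a : ι, μ (if (a ⟨p+1, by omega⟩ : ℕ) = c
        then {x : OdoSpace | ∀ j : Fin (p + 2), x (j : ℕ) = a j} else (∅ : Set OdoSpace)))
      = ∑ a : ι, ∏ j : Fin (p + 2), (if (j : ℕ) = p + 1
        then (if (a j : ℕ) = c then ((2:ℝ≥0∞) ^ ((j:ℕ) + 1))⁻¹ else 0)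
        else ((2:ℝ≥0∞) ^ ((j:ℕ) + 1))⁻¹) := Finset.sum_congr rfl fun a _ => hval a
  _ = ∏ j : Fin (p + 2), ∑ v : Fin (2 ^ ((j : ℕ) + 1)), (if (j : ℕ) = p + 1
        then (if (v : ℕ) = c then ((2:ℝ≥0∞) ^ ((j:ℕ) + 1))⁻¹ else 0)
        else ((2:ℝ≥0∞) ^ ((j:ℕ) + 1))⁻¹) := by
      rw [Finset.prod_univ_sum]
      rw [Fintype.piFinset_univ]
  _ ≤ ((2 : ℝ≥0∞) ^ (p + 2))⁻¹ := by
      have hle : ∀ j : Fin (p + 2), (∑ v : Fin (2 ^ ((j : ℕ) + 1)), (if (j : ℕ) = p + 1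
          then (if (v : ℕ) = c then ((2:ℝ≥0∞) ^ ((j:ℕ) + 1))⁻¹ else 0)
          else ((2:ℝ≥0∞) ^ ((j:ℕ) + 1))⁻¹)) ≤
          (if j = (⟨p+1, by omega⟩ : Fin (p+2)) then ((2:ℝ≥0∞) ^ ((j:ℕ) + 1))⁻¹ else 1) := by
        intro j
        by_cases hj : (j : ℕ) = p + 1
        · rw [if_pos (Fin.ext hj)]
          have e1 : ∀ v : Fin (2 ^ ((j : ℕ) + 1)), (if (j : ℕ) = p + 1
              then (if (v : ℕ) = c then ((2:ℝ≥0∞) ^ ((j:ℕ) + 1))⁻¹ else 0)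
              else ((2:ℝ≥0∞) ^ ((j:ℕ) + 1))⁻¹) =
              (if (v : ℕ) = c then ((2:ℝ≥0∞) ^ ((j:ℕ) + 1))⁻¹ else 0) :=
            fun v => by rw [if_pos hj]
          rw [Finset.sum_congr rfl (fun v _ => e1 v), ← Finset.sum_filter, Finset.sum_const]
          have hcard : (Finset.univ.filter
              (fun v : Fin (2 ^ ((j:ℕ) + 1)) => (v : ℕ) = c)).card ≤ 1 := by
            apply Finset.card_le_one.2
            intro a ha b hb
            simp only [Finset.mem_filter] at ha hb
            exact Fin.ext (by rw [ha.2, hb.2])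
          calc (Finset.univ.filter (fun v : Fin (2 ^ ((j:ℕ) + 1)) => (v : ℕ) = c)).card •
                ((2:ℝ≥0∞) ^ ((j:ℕ) + 1))⁻¹
              ≤ 1 • ((2:ℝ≥0∞) ^ ((j:ℕ) + 1))⁻¹ := by
                apply smul_le_smul_of_nonneg_right ?_ zero_le
                exact hcard
          _ = ((2:ℝ≥0∞) ^ ((j:ℕ) + 1))⁻¹ := one_smul _ _
        · rw [if_neg (fun hc' : j = ⟨p+1, by omega⟩ => hj (by rw [hc']))]
          have e1 : ∀ v : Fin (2 ^ ((j : ℕ) + 1)), (if (j : ℕ) = p + 1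
              then (if (v : ℕ) = c then ((2:ℝ≥0∞) ^ ((j:ℕ) + 1))⁻¹ else 0)
              else ((2:ℝ≥0∞) ^ ((j:ℕ) + 1))⁻¹) = ((2:ℝ≥0∞) ^ ((j:ℕ) + 1))⁻¹ :=
            fun v => by rw [if_neg hj]
          rw [Finset.sum_congr rfl (fun v _ => e1 v), Finset.sum_const, Finset.card_univ,
            Fintype.card_fin, nsmul_eq_mul]
          rw [show ((2 ^ ((j:ℕ) + 1) : ℕ) : ℝ≥0∞) = (2:ℝ≥0∞) ^ ((j:ℕ) + 1) by
            rw [Nat.cast_pow]; norm_num]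
          exact le_of_eq (ENNReal.mul_inv_cancel (by positivity) (by
            exact ENNReal.pow_ne_top (by norm_num)))
      calc (∏ j : Fin (p + 2), ∑ v : Fin (2 ^ ((j : ℕ) + 1)), (if (j : ℕ) = p + 1
            then (if (v : ℕ) = c then ((2:ℝ≥0∞) ^ ((j:ℕ) + 1))⁻¹ else 0)
            else ((2:ℝ≥0∞) ^ ((j:ℕ) + 1))⁻¹))
          ≤ ∏ j : Fin (p + 2), (if j = (⟨p+1, by omega⟩ : Fin (p+2))
              then ((2:ℝ≥0∞) ^ ((j:ℕ) + 1))⁻¹ else 1) :=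
            Finset.prod_le_prod' fun j _ => hle j
      _ = ((2:ℝ≥0∞) ^ ((p+1) + 1))⁻¹ := by
          rw [Finset.prod_ite_eq' Finset.univ (⟨p+1, by omega⟩ : Fin (p+2))
            (fun j => ((2:ℝ≥0∞) ^ ((j:ℕ) + 1))⁻¹), if_pos (Finset.mem_univ _)]
      _ = ((2 : ℝ≥0∞) ^ (p + 2))⁻¹ := rfl

end Measure


theorem stmt_13 (μ : Measure OdoSpace) [IsProbabilityMeasure μ]
    (hμ : ∀ (k : ℕ) (a : (n : Fin k) → Fin (2 ^ ((n : ℕ) + 1))),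
      μ {x : OdoSpace | ∀ n : Fin k, x (n : ℕ) = a n} =
        ∏ n : Fin k, ((2 : ℝ≥0∞) ^ ((n : ℕ) + 1))⁻¹)
    -- `F` is the flow built under `f` with base `odometer`: return-time characterization
    (F : ℝ → OdoSpace × ℝ → OdoSpace × ℝ)
    (hpos : ∀ t : ℝ, 0 < t → ∀ x : OdoSpace,
      ((F t (x, 0)).2 = 0 ↔
        ∃ k : ℕ, 1 ≤ k ∧ t = ∑ i ∈ Finset.range k, (ff (odometer^[i] x) : ℝ)))
    (hneg : ∀ t : ℝ, t < 0 → ∀ x : OdoSpace,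
      ((F t (x, 0)).2 = 0 ↔
        ∃ k : ℕ, 1 ≤ k ∧ t = -∑ i ∈ Finset.range k, (ff (odometerInv^[i + 1] x) : ℝ))) :
    ∀ δ : ℝ, 0 < δ →
      Tendsto (fun s : ℝ => μ {x : OdoSpace | ∃ t : ℝ,
          Real.exp (s - δ) < |t| ∧ |t| < Real.exp (s + δ) ∧ (F t (x, 0)).2 = 0})
        atTop (nhds 0) := by
  intro δ hδ
  rw [ENNReal.tendsto_nhds_zero]
  intro ε hε
  obtain ⟨j, hj⟩ := ENNReal.exists_inv_two_pow_lt (ne_of_gt hε)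
  obtain ⟨mf, hmf⟩ := exists_nat_gt (Real.exp (2 * δ))
  set m₂ : ℕ := max (2 ^ (j + 1)) (max 4 mf) with hm₂
  rw [eventually_atTop]
  refine ⟨δ + Real.log ((Kfac (m₂ + 1) : ℝ) + 1), fun s hs => ?_⟩
  -- basic positivity
  have hKpos : (0:ℝ) < (Kfac (m₂ + 1) : ℝ) + 1 := by positivity
  have hexp : (Kfac (m₂ + 1) : ℝ) < Real.exp (s - δ) := by
    have h1 : Real.exp (Real.log ((Kfac (m₂ + 1) : ℝ) + 1)) = (Kfac (m₂ + 1) : ℝ) + 1 :=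
      Real.exp_log hKpos
    have h2 : Real.log ((Kfac (m₂ + 1) : ℝ) + 1) ≤ s - δ := by linarith
    have h3 := Real.exp_le_exp.2 h2
    linarith
  -- the greatest n₀ with Kfac n₀ ≤ exp (s - δ)
  set P : ℕ → Prop := fun m => (Kfac m : ℝ) ≤ Real.exp (s - δ) with hP
  have hB : ∀ m, P m → m ≤ ⌊Real.exp (s - δ)⌋₊ := fun m hm =>
    Nat.le_floor (le_trans (by exact_mod_cast Nat.cast_le.2 (self_le_Kfac m)) hm)
  have hPm₂ : P (m₂ + 1) := le_of_lt hexp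
  set n₀ : ℕ := Nat.findGreatest P ⌊Real.exp (s - δ)⌋₊ with hn₀
  have hn₀P : P n₀ := Nat.findGreatest_spec (hB _ hPm₂) hPm₂
  have hm₂n₀ : m₂ + 1 ≤ n₀ := Nat.le_findGreatest (hB _ hPm₂) hPm₂
  have hn₀succ : ¬ P (n₀ + 1) := by
    intro hc
    exact Nat.findGreatest_is_greatest (lt_add_one n₀) (hB _ hc) hc
  -- properties transferred
  have hm₂4 : 4 ≤ m₂ := le_trans (le_max_left _ _) (le_max_right _ _)
  have hm₂j : 2 ^ (j + 1) ≤ m₂ := le_max_left _ _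
  have hm₂f : mf ≤ m₂ := le_trans (le_max_right _ _) (le_max_right _ _)
  -- the bad sets
  set Bset : ℕ → Set OdoSpace := fun n =>
    {x : OdoSpace | (x (Nat.log 2 n - 2 + 1) : ℕ) = n - 2 ^ (Nat.log 2 n)} with hBset
  set Ef : Set OdoSpace := {x : OdoSpace | ∃ i : ℕ, x = odometerInv^[i] maxPoint} with hEf
  set Eb : Set OdoSpace := {x : OdoSpace | ∃ i : ℕ, x = odometer^[i] zeroPoint} with hEb
  -- measure bound for Bset
  have hBmeas : ∀ n : ℕ, 4 ≤ n → 2 ^ (j + 1) ≤ n → μ (Bset n) ≤ 2⁻¹ ^ (j + 1) := by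
    intro n h4 hjn
    have hL2 : 2 ≤ Nat.log 2 n :=
      (Nat.le_log_iff_pow_le (by norm_num) (by omega)).2 (by norm_num; omega)
    have hLj : j + 1 ≤ Nat.log 2 n :=
      (Nat.le_log_iff_pow_le (by norm_num) (by omega)).2 hjn
    have h1 : μ (Bset n) ≤ ((2:ℝ≥0∞) ^ (Nat.log 2 n - 2 + 2))⁻¹ :=
      cylinder_bound hμ (Nat.log 2 n - 2) (n - 2 ^ (Nat.log 2 n))
    have h2 : Nat.log 2 n - 2 + 2 = Nat.log 2 n := by omega
    rw [h2] at h1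
    refine h1.trans ?_
    rw [← ENNReal.inv_pow]
    exact ENNReal.inv_le_inv.2 (pow_le_pow_right₀ (by norm_num) hLj)
  -- the inclusion
  have hsub : {x : OdoSpace | ∃ t : ℝ,
      Real.exp (s - δ) < |t| ∧ |t| < Real.exp (s + δ) ∧ (F t (x, 0)).2 = 0} ⊆
      (Bset n₀ ∪ Bset (n₀ + 1)) ∪ (Ef ∪ Eb) := by
    rintro x ⟨t, ht1, ht2, htF⟩
    have hexppos := Real.exp_pos (s - δ)
    have htne : t ≠ 0 := by
      intro hc; rw [hc, abs_zero] at ht1; linarith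
    -- a helper doing the common work
    have main : ∀ (Ssum : ℕ) (k : ℕ), 1 ≤ k →
        ((Ssum : ℝ) = |t|) →
        (∀ n p c : ℕ, c < 2 ^ (p + 2) → n = 2 ^ (p + 2) + c →
          Kfac n ≤ Ssum → Ssum < Kfac (n + 1) →
          ((x (p + 1) : ℕ) = c ∨ x ∈ Ef ∪ Eb)) →
        1 ≤ Ssum →
        x ∈ (Bset n₀ ∪ Bset (n₀ + 1)) ∪ (Ef ∪ Eb) := by
      intro Ssum k hk hcast hcore hS1
      have hltS : Real.exp (s - δ) < (Ssum : ℝ) := by rw [hcast]; exact ht1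
      have hltS2 : (Ssum : ℝ) < Real.exp (s + δ) := by rw [hcast]; exact ht2
      -- the interval index of Ssum
      set n : ℕ := Nat.findGreatest (fun m => Kfac m ≤ Ssum) Ssum with hn
      have hKS : Kfac n ≤ Ssum := by
        have h0 : Kfac 0 ≤ Ssum := by simpa [Kfac_zero] using hS1
        exact Nat.findGreatest_spec (P := fun m => Kfac m ≤ Ssum) (Nat.zero_le _) h0
      have hKS2 : ¬ Kfac (n + 1) ≤ Ssum := by
        intro hc
        exact Nat.findGreatest_is_greatest (lt_add_one n)
          (le_trans (self_le_Kfac _) hc) hc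
      -- n₀ ≤ n
      have hn_ge : n₀ ≤ n := by
        by_contra hlt
        push_neg at hlt
        have h1 : Kfac (n + 1) ≤ Kfac n₀ := Kfac_mono (by omega)
        have h2 : (Kfac n₀ : ℝ) ≤ Real.exp (s - δ) := hn₀P
        have h3 : (Kfac n₀ : ℝ) < (Ssum : ℝ) := lt_of_le_of_lt h2 hltS
        have h4 : Kfac n₀ < Ssum := by exact_mod_cast h3
        omega
      -- n ≤ n₀ + 1
      have hn_le : n ≤ n₀ + 1 := by
        by_contra hgt
        push_neg at hgt
        have h1 : Kfac (n₀ + 2) ≤ Kfac n := Kfac_mono (by omega)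
        have h2 : Kfac (n₀ + 2) ≤ Ssum := le_trans h1 hKS
        have h3 : (Kfac (n₀ + 2) : ℝ) < Real.exp (s + δ) :=
          lt_of_le_of_lt (by exact_mod_cast Nat.cast_le.2 h2) hltS2
        -- but Kfac (n₀+2) > exp (s+δ)
        have h4 : (Kfac (n₀ + 2) : ℝ) = (Kfac (n₀ + 1) : ℝ) * (Nat.factorial (n₀ + 2) : ℝ) := by
          rw [Kfac_succ (n₀ + 1)]; push_cast; ring
        have h5 : Real.exp (s - δ) < (Kfac (n₀ + 1) : ℝ) := by
          have := hn₀succ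
          simp only [hP, not_le] at this
          exact this
        have h6 : Real.exp (2 * δ) ≤ (Nat.factorial (n₀ + 2) : ℝ) := by
          have e0 : mf ≤ Nat.factorial (n₀ + 2) :=
            le_trans (by omega) (Nat.self_le_factorial (n₀ + 2))
          have e1 : (mf : ℝ) ≤ (Nat.factorial (n₀ + 2) : ℝ) := Nat.cast_le.2 e0
          linarith
        have h7 : Real.exp (s - δ) * Real.exp (2 * δ) <
            (Kfac (n₀ + 1) : ℝ) * (Nat.factorial (n₀ + 2) : ℝ) :=
          mul_lt_mul h5 h6 (Real.exp_pos _) (by positivity)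
        rw [← Real.exp_add] at h7
        have h8 : s - δ + 2 * δ = s + δ := by ring
        rw [h8] at h7
        linarith
      -- facts about n
      have hn4 : 4 ≤ n := by omega
      have hnne : n ≠ 0 := by omega
      have hL2 : 2 ≤ Nat.log 2 n :=
        (Nat.le_log_iff_pow_le (by norm_num) hnne).2 (by norm_num; omega)
      have hp2 : Nat.log 2 n - 2 + 2 = Nat.log 2 n := by omega
      have h2pn : 2 ^ (Nat.log 2 n - 2 + 2) ≤ n := by
        rw [hp2]; exact Nat.pow_log_le_self 2 hnne
      have hn2p : n < 2 ^ (Nat.log 2 n - 2 + 3) := by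
        have h1 := Nat.lt_pow_succ_log_self (b := 2) (by norm_num) n
        rwa [show Nat.log 2 n - 2 + 3 = Nat.log 2 n + 1 by omega]
      have hc : n - 2 ^ (Nat.log 2 n) < 2 ^ (Nat.log 2 n - 2 + 2) := by
        rw [hp2]
        have e1 : (2:ℕ) ^ (Nat.log 2 n - 2 + 3) = 2 ^ (Nat.log 2 n) * 2 := by
          rw [show Nat.log 2 n - 2 + 3 = (Nat.log 2 n - 2 + 2) + 1 by omega, pow_succ, hp2]
        rw [hp2] at h2pn
        omega
      have hneq : n = 2 ^ (Nat.log 2 n - 2 + 2) + (n - 2 ^ (Nat.log 2 n)) := by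
        rw [hp2]
        rw [hp2] at h2pn
        omega
      have hres := hcore n (Nat.log 2 n - 2) (n - 2 ^ (Nat.log 2 n)) hc hneq hKS (by omega)
      rcases hres with hres | hres
      · left
        have hxB : x ∈ Bset n := hres
        rcases (by omega : n = n₀ ∨ n = n₀ + 1) with he | he
        · left; rwa [he] at hxB
        · right; rwa [he] at hxB
      · right; exact hres
    rcases lt_trichotomy t 0 with htneg | htz | htpos
    · -- negative time
      obtain ⟨k, hk1, hk2⟩ := (hneg t htneg x).1 htF
      have habs : |t| = ∑ i ∈ Finset.range k, (ff (odometerInv^[i + 1] x) : ℝ) := by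
        rw [abs_of_neg htneg, hk2]; ring
      have hcast : ((∑ i ∈ Finset.range k, ff (odometerInv^[i + 1] x) : ℕ) : ℝ) = |t| := by
        rw [habs]; push_cast; rfl
      refine main _ k hk1 hcast ?_ ?_
      · intro n p c hcp hneq hS1 hS2
        rcases bwd_main hcp hk1 hneq hS1 hS2 with h | ⟨i, _, hi⟩
        · exact Or.inl h
        · exact Or.inr (Or.inr (mem_orbit_of_iterate_zero hi))
      · calc 1 ≤ ff (odometerInv^[0 + 1] x) := one_le_Kfac _
        _ ≤ ∑ i ∈ Finset.range k, ff (odometerInv^[i + 1] x) :=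
          Finset.single_le_sum (f := fun i => ff (odometerInv^[i + 1] x))
            (fun _ _ => Nat.zero_le _) (Finset.mem_range.2 (by omega))
    · exact absurd ht1 (by rw [htz, abs_zero]; intro hcon; linarith)
    · -- positive time
      obtain ⟨k, hk1, hk2⟩ := (hpos t htpos x).1 htF
      have hcast : ((∑ i ∈ Finset.range k, ff (odometer^[i] x) : ℕ) : ℝ) = |t| := by
        rw [abs_of_pos htpos, hk2]; push_cast; rfl
      refine main _ k hk1 hcast ?_ ?_
      · intro n p c hcp hneq hS1 hS2
        rcases fwd_main hcp hk1 hneq hS1 hS2 with h | ⟨i, _, hi⟩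
        · exact Or.inl h
        · exact Or.inr (Or.inl (mem_inv_orbit_of_iterate_max hi))
      · calc 1 ≤ ff (odometer^[0] x) := one_le_Kfac _
        _ ≤ ∑ i ∈ Finset.range k, ff (odometer^[i] x) :=
          Finset.single_le_sum (f := fun i => ff (odometer^[i] x))
            (fun _ _ => Nat.zero_le _) (Finset.mem_range.2 (by omega))
  -- put the measure bounds together
  have hfinal : μ {x : OdoSpace | ∃ t : ℝ,
      Real.exp (s - δ) < |t| ∧ |t| < Real.exp (s + δ) ∧ (F t (x, 0)).2 = 0} ≤
      2⁻¹ ^ (j + 1) + 2⁻¹ ^ (j + 1) := by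
    calc μ {x : OdoSpace | ∃ t : ℝ,
        Real.exp (s - δ) < |t| ∧ |t| < Real.exp (s + δ) ∧ (F t (x, 0)).2 = 0}
        ≤ μ ((Bset n₀ ∪ Bset (n₀ + 1)) ∪ (Ef ∪ Eb)) := measure_mono hsub
    _ ≤ μ (Bset n₀ ∪ Bset (n₀ + 1)) + μ (Ef ∪ Eb) := measure_union_le _ _
    _ ≤ (μ (Bset n₀) + μ (Bset (n₀ + 1))) + (μ Ef + μ Eb) :=
        add_le_add (measure_union_le _ _) (measure_union_le _ _)
    _ ≤ (2⁻¹ ^ (j + 1) + 2⁻¹ ^ (j + 1)) + (0 + 0) := by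
        apply add_le_add
        · apply add_le_add
          · exact hBmeas n₀ (by omega) (by omega)
          · exact hBmeas (n₀ + 1) (by omega) (by omega)
        · apply add_le_add
          · exact le_of_eq (orbit_null hμ _ _)
          · exact le_of_eq (orbit_null hμ _ _)
    _ = 2⁻¹ ^ (j + 1) + 2⁻¹ ^ (j + 1) := by rw [add_zero, add_zero]
  refine hfinal.trans ?_
  have hhalf : (2⁻¹ : ℝ≥0∞) ^ (j + 1) + 2⁻¹ ^ (j + 1) = 2⁻¹ ^ j := by
    rw [pow_succ]
    rw [← mul_add, ENNReal.inv_two_add_inv_two, mul_one]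
  rw [hhalf]
  exact le_of_lt hj
end
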